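/- arXiv:1301.0710 — 4 statements merged into one kernel-verified Lean document; each statement's English description precedes it below -/
import Mathlib

section
/- Let g : [0,∞) → [0,∞) be a decreasing, right-continuous function. Suppose there exist α > 0 and B > 0 such that t · g(s+t) ≤ B · g(s)^{1+α} for every s, t ≥ 0. Then g(s) = 0 for all s ≥ s∞, where s∞ := 2B · g(0)^α / (1 − 2^{−α}). -/
/-- De Giorgi-type iteration lemma: if `g : [0,∞) → [0,∞)` is decreasing, right-continuous
and satisfies `t * g (s+t) ≤ B * g s ^ (1+α)` for all `s, t ≥ 0`, then `g` vanishes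
for `s ≥ s∞ := 2 * B * g 0 ^ α / (1 - 2 ^ (-α))`. -/
theorem stmt0 (g : ℝ → ℝ) (α B : ℝ) (hα : 0 < α) (hB : 0 < B)
    (hg_nonneg : ∀ s, 0 ≤ s → 0 ≤ g s)
    (hg_mono : ∀ s t, 0 ≤ s → s ≤ t → g t ≤ g s)
    (hg_rc : ∀ s, 0 ≤ s → ContinuousWithinAt g (Set.Ici s) s)
    (hiter : ∀ s t, 0 ≤ s → 0 ≤ t → t * g (s + t) ≤ B * g s ^ (1 + α)) :
    ∀ s, 2 * B * g 0 ^ α / (1 - 2 ^ (-α)) ≤ s → g s = 0 := by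
  intro s hs
  have hG0 : 0 ≤ g 0 := hg_nonneg 0 le_rfl
  have hr0 : (0:ℝ) < (2:ℝ) ^ (-α) := Real.rpow_pos_of_pos (by norm_num) _
  have hr1 : (2:ℝ) ^ (-α) < 1 :=
    Real.rpow_lt_one_of_one_lt_of_neg one_lt_two (neg_neg_of_pos hα)
  have hden : (0:ℝ) < 1 - (2:ℝ) ^ (-α) := by linarith
  have hGα : (0:ℝ) ≤ g 0 ^ α := Real.rpow_nonneg hG0 α
  have hs0 : 0 ≤ s := le_trans (div_nonneg (by positivity) hden.le) hs
  have hgs0 : 0 ≤ g s := hg_nonneg s hs0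
  rcases eq_or_lt_of_le hG0 with h0 | hG0pos
  · have h1 := hg_mono 0 s le_rfl hs0
    linarith
  · set r := (2:ℝ) ^ (-α) with hrdef
    set C := 2 * B * g 0 ^ α with hCdef
    have hC : 0 < C := by
      have := Real.rpow_pos_of_pos hG0pos α
      positivity
    -- the iteration sequence s_k = C (1 - r^k)/(1-r)
    have hrk1 : ∀ k : ℕ, r ^ k ≤ 1 := fun k => pow_le_one₀ hr0.le hr1.le
    have hseq_nonneg : ∀ k : ℕ, 0 ≤ C * (1 - r ^ k) / (1 - r) := by
      intro k
      have := hrk1 k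
      have h0 : (0:ℝ) ≤ 1 - r ^ k := by linarith
      positivity
    have hseq_le : ∀ k : ℕ, C * (1 - r ^ k) / (1 - r) ≤ s := by
      intro k
      refine le_trans ?_ hs
      have h1 : C * (1 - r ^ k) ≤ C := by nlinarith [pow_pos hr0 k]
      exact div_le_div_of_nonneg_right h1 hden.le
    have claim : ∀ k : ℕ, g (C * (1 - r ^ k) / (1 - r)) ≤ g 0 * (2:ℝ) ^ (-(k:ℝ)) := by
      intro k
      induction k with
      | zero => simp
      | succ k ih =>
        have hstep : C * (1 - r ^ (k+1)) / (1 - r)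
            = C * (1 - r ^ k) / (1 - r) + C * r ^ k := by
          field_simp
          ring
        have ht : 0 < C * r ^ k := by positivity
        have hit := hiter (C * (1 - r ^ k) / (1 - r)) (C * r ^ k)
          (hseq_nonneg k) ht.le
        have hgk : 0 ≤ g (C * (1 - r ^ k) / (1 - r)) :=
          hg_nonneg _ (hseq_nonneg k)
        have hbase : g (C * (1 - r ^ k) / (1 - r)) ^ (1 + α)
            ≤ (g 0 * (2:ℝ) ^ (-(k:ℝ))) ^ (1 + α) :=
          Real.rpow_le_rpow hgk ih (by linarith)
        -- key algebraic identity
        have e2 : r ^ k = (2:ℝ) ^ (-α * (k:ℝ)) := by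
          rw [hrdef, ← Real.rpow_natCast ((2:ℝ) ^ (-α)) k,
            ← Real.rpow_mul (by norm_num : (0:ℝ) ≤ 2)]
        have e1 : ((2:ℝ) ^ (-(k:ℝ))) ^ (1 + α) = (2:ℝ) ^ (-(k:ℝ) * (1 + α)) :=
          (Real.rpow_mul (by norm_num : (0:ℝ) ≤ 2) _ _).symm
        have e3 : g 0 ^ (1 + α) = g 0 * g 0 ^ α := by
          rw [Real.rpow_add hG0pos, Real.rpow_one]
        have e4 : (2:ℝ) * ((2:ℝ) ^ (-α * (k:ℝ)) * (2:ℝ) ^ (-((k:ℝ)+1))) =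
            (2:ℝ) ^ (-(k:ℝ) * (1 + α)) := by
          rw [← Real.rpow_add (by norm_num : (0:ℝ) < 2),
            mul_comm (2:ℝ), ← Real.rpow_add_one (by norm_num : (2:ℝ) ≠ 0)]
          ring_nf
        have hkey : B * (g 0 * (2:ℝ) ^ (-(k:ℝ))) ^ (1 + α)
            = (C * r ^ k) * (g 0 * (2:ℝ) ^ (-((k:ℝ)+1))) := by
          rw [Real.mul_rpow hG0 (Real.rpow_nonneg (by norm_num) _), e1, e2, e3, hCdef]
          linear_combination (B * g 0 * g 0 ^ α) * e4.symm
        have h5 : (C * r ^ k) * g (C * (1 - r ^ k) / (1 - r) + C * r ^ k)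
            ≤ (C * r ^ k) * (g 0 * (2:ℝ) ^ (-((k:ℝ)+1))) := by
          calc (C * r ^ k) * g (C * (1 - r ^ k) / (1 - r) + C * r ^ k)
              ≤ B * g (C * (1 - r ^ k) / (1 - r)) ^ (1 + α) := hit
            _ ≤ B * (g 0 * (2:ℝ) ^ (-(k:ℝ))) ^ (1 + α) :=
                mul_le_mul_of_nonneg_left hbase hB.le
            _ = _ := hkey
        have h6 := le_of_mul_le_mul_left h5 ht
        rw [← hstep] at h6
        have hcast : -((k:ℝ) + 1) = -((k+1 : ℕ) : ℝ) := by push_cast; ring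
        rwa [hcast] at h6
    -- conclude by taking limits
    have hineq : ∀ k : ℕ, g s ≤ g 0 * (2:ℝ) ^ (-(k:ℝ)) := by
      intro k
      exact le_trans (hg_mono _ s (hseq_nonneg k) (hseq_le k)) (claim k)
    have hform : ∀ k : ℕ, g 0 * (2:ℝ) ^ (-(k:ℝ)) = g 0 * (1/2:ℝ) ^ k := by
      intro k
      rw [Real.rpow_neg (by norm_num : (0:ℝ) ≤ 2), Real.rpow_natCast, one_div, inv_pow]
    have htend : Filter.Tendsto (fun k : ℕ => g 0 * (2:ℝ) ^ (-(k:ℝ)))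
        Filter.atTop (nhds 0) := by
      have h := (tendsto_pow_atTop_nhds_zero_of_lt_one (by norm_num : (0:ℝ) ≤ 1/2)
        (by norm_num : (1/2:ℝ) < 1)).const_mul (g 0)
      rw [mul_zero] at h
      exact h.congr (fun k => (hform k).symm)
    have : g s ≤ 0 := ge_of_tendsto' htend hineq
    linarith
end

section
/- Under the hypotheses of the De Giorgi-type iteration lemma (g decreasing, right-continuous, t·g(s+t) ≤ B·g(s)^{1+α} for all s,t ≥ 0 with α, B > 0), the sequence defined by s₀ = 0 and s_{j+1} = s_j + 2B·g(s_j)^α satisfies g(s_j) ≤ g(0)/2^j for all j, hence g(s_j) → 0. -/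
open Filter

/-- Under the hypotheses of the De Giorgi-type iteration lemma, the sequence
`s 0 = 0`, `s (j+1) = s j + 2 * B * g (s j) ^ α` satisfies `g (s j) ≤ g 0 / 2 ^ j`,
hence `g (s j) → 0`. -/
theorem stmt1 (g : ℝ → ℝ) (α B : ℝ) (hα : 0 < α) (hB : 0 < B)
    (hg_nonneg : ∀ s, 0 ≤ s → 0 ≤ g s)
    (hg_mono : ∀ s t, 0 ≤ s → s ≤ t → g t ≤ g s)
    (hg_rc : ∀ s, 0 ≤ s → ContinuousWithinAt g (Set.Ici s) s)
    (hiter : ∀ s t, 0 ≤ s → 0 ≤ t → t * g (s + t) ≤ B * g s ^ (1 + α))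
    (s : ℕ → ℝ) (hs0 : s 0 = 0)
    (hsrec : ∀ j, s (j + 1) = s j + 2 * B * g (s j) ^ α) :
    (∀ j, g (s j) ≤ g 0 / 2 ^ j) ∧
      Tendsto (fun j => g (s j)) atTop (nhds 0) := by
  have key : ∀ j, 0 ≤ s j ∧ g (s j) ≤ g 0 / 2 ^ j := by
    intro j
    induction j with
    | zero => exact ⟨le_of_eq hs0.symm, by simp [hs0]⟩
    | succ j ih =>
      obtain ⟨hsj, hgj⟩ := ih
      have ha : 0 ≤ g (s j) := hg_nonneg _ hsj
      have hpow : (0:ℝ) ≤ g (s j) ^ α := Real.rpow_nonneg ha _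
      have ht : 0 ≤ 2 * B * g (s j) ^ α := by positivity
      have hs' : 0 ≤ s (j + 1) := by rw [hsrec]; linarith
      have hhalf : g (s (j + 1)) ≤ g (s j) / 2 := by
        rcases eq_or_lt_of_le ha with h0 | hpos
        · have : g (s j) ^ α = 0 := by
            rw [← h0, Real.zero_rpow hα.ne']
          have hse : s (j + 1) = s j := by rw [hsrec, this]; ring
          rw [hse, ← h0]; norm_num
        · have hpowpos : 0 < g (s j) ^ α := Real.rpow_pos_of_pos hpos _
          have h1 := hiter (s j) (2 * B * g (s j) ^ α) hsj ht
          rw [Real.rpow_add hpos, Real.rpow_one] at h1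
          rw [hsrec]
          nlinarith [mul_pos hB hpowpos]
      have : g (s (j + 1)) ≤ g 0 / 2 ^ (j + 1) := by
        rw [pow_succ]
        calc g (s (j + 1)) ≤ g (s j) / 2 := hhalf
          _ ≤ (g 0 / 2 ^ j) / 2 := by linarith
          _ = g 0 / (2 ^ j * 2) := by ring
      exact ⟨hs', this⟩
  refine ⟨fun j => (key j).2, ?_⟩
  have h0 : Tendsto (fun j : ℕ => g 0 / 2 ^ j) atTop (nhds 0) := by
    simpa using tendsto_const_nhds.div_atTop (tendsto_pow_atTop_atTop_of_one_lt (by norm_num : (1:ℝ) < 2))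
  exact squeeze_zero (fun j => hg_nonneg _ (key j).1) (fun j => (key j).2) h0
end

section
/- For 1 ≤ m ≤ n, the cone Γ_m = {λ ∈ ℝⁿ : σ₁(λ) > 0, …, σ_m(λ) > 0}, where σ_k denotes the k-th elementary symmetric polynomial, is a convex subset of ℝⁿ. -/
/-- The `k`-th elementary symmetric polynomial of `λ ∈ ℝⁿ`. -/
noncomputable def esymm (n k : ℕ) (lam : Fin n → ℝ) : ℝ :=
  ∑ s ∈ Finset.univ.powersetCard k, ∏ i ∈ s, lam i

/-- The Gårding cone `Γ_m = {λ ∈ ℝⁿ : σ₁(λ) > 0, …, σ_m(λ) > 0}`. -/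
def GardingCone (n m : ℕ) : Set (Fin n → ℝ) :=
  {lam | ∀ k, 1 ≤ k → k ≤ m → 0 < esymm n k lam}

open Polynomial Finset Complex

noncomputable def Complex.abs : AbsoluteValue ℂ ℝ := NormedField.toAbsoluteValue ℂ

lemma Complex.norm_eq_abs (z : ℂ) : ‖z‖ = Complex.abs z := rfl

lemma Complex.abs_ofReal (r : ℝ) : Complex.abs (r : ℂ) = |r| := Complex.norm_real r

lemma Complex.abs_I : Complex.abs Complex.I = 1 := Complex.norm_I

lemma Complex.continuous_abs : Continuous Complex.abs := continuous_norm

noncomputable def cesymm (n k : ℕ) (w : Fin n → ℂ) : ℂ :=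
  ∑ s ∈ Finset.univ.powersetCard k, ∏ i ∈ s, w i

lemma cesymm_ofReal (n k : ℕ) (x : Fin n → ℝ) :
    ((esymm n k x : ℝ) : ℂ) = cesymm n k (fun i => (x i : ℂ)) := by
  simp [esymm, cesymm]

lemma cesymm_smul (n k : ℕ) (t : ℂ) (w : Fin n → ℂ) :
    cesymm n k (fun i => t * w i) = t ^ k * cesymm n k w := by
  unfold cesymm
  rw [Finset.mul_sum]
  refine Finset.sum_congr rfl fun s hs => ?_
  rw [Finset.prod_mul_distrib, Finset.prod_const, (Finset.mem_powersetCard.mp hs).2]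

lemma cesymm_const_one (n k : ℕ) : cesymm n k (fun _ => 1) = (n.choose k : ℂ) := by
  simp [cesymm, Finset.card_powersetCard]

lemma esymm_const_one (n k : ℕ) : esymm n k (fun _ => 1) = (n.choose k : ℝ) := by
  simp [esymm, Finset.card_powersetCard]

lemma esymm_smul (n k : ℕ) (t : ℝ) (x : Fin n → ℝ) :
    esymm n k (fun i => t * x i) = t ^ k * esymm n k x := by
  unfold esymm
  rw [Finset.mul_sum]
  refine Finset.sum_congr rfl fun s hs => ?_
  rw [Finset.prod_mul_distrib, Finset.prod_const, (Finset.mem_powersetCard.mp hs).2]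

lemma cesymm_continuous (n k : ℕ) : Continuous (cesymm n k) := by
  refine continuous_finset_sum _ fun s _ => continuous_finset_prod _ fun i _ => continuous_apply i

/-- quantitative nonvanishing near a point where `cesymm` is nonzero -/
lemma cesymm_delta (n k : ℕ) (v : Fin n → ℂ) (hv : cesymm n k v ≠ 0) :
    ∃ δ > 0, ∀ w : Fin n → ℂ, (∀ i, Complex.abs (w i) ≤ δ) →
      cesymm n k (fun i => v i + w i) ≠ 0 := by
  have hc : ContinuousAt (cesymm n k) v := (cesymm_continuous n k).continuousAt
  rw [Metric.continuousAt_iff] at hc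
  have habs : 0 < Complex.abs (cesymm n k v) := by
    simpa [Complex.abs.pos_iff] using hv
  obtain ⟨δ, hδ, hd⟩ := hc (Complex.abs (cesymm n k v)) habs
  refine ⟨δ / 2, by positivity, fun w hw hz => ?_⟩
  have hdist : dist (fun i => v i + w i) v < δ := by
    have h2 : dist (fun i => v i + w i) v ≤ δ / 2 := by
      refine (dist_pi_le_iff (by positivity)).2 fun i => ?_
      simpa [Complex.dist_eq] using (show ‖w i‖ ≤ δ / 2 from hw i)
    linarith
  have := hd hdist
  rw [hz] at this
  simp only [dist_zero_left] at this
  rw [Complex.norm_eq_abs] at this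
  exact absurd this (not_lt.2 le_rfl)

open Polynomial Finset Complex

/-- `QR n k x` is the polynomial `t ↦ σ_k(x + t·𝟙)`. -/
noncomputable def QR (n k : ℕ) (x : Fin n → ℝ) : Polynomial ℝ :=
  ∑ s ∈ Finset.univ.powersetCard k, ∏ i ∈ s, (Polynomial.X + Polynomial.C (x i))

lemma eval_QR (n k : ℕ) (x : Fin n → ℝ) (r : ℝ) :
    (QR n k x).eval r = esymm n k (fun i => x i + r) := by
  simp [QR, esymm, eval_finset_sum, eval_prod, add_comm]

lemma aeval_QR (n k : ℕ) (x : Fin n → ℝ) (z : ℂ) :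
    Polynomial.aeval z (QR n k x) = cesymm n k (fun i => (x i : ℂ) + z) := by
  simp [QR, cesymm, map_sum, map_prod, add_comm]

lemma coeff_QR (n k : ℕ) (x : Fin n → ℝ) :
    (QR n k x).coeff k = (n.choose k : ℝ) := by
  rw [QR, finset_sum_coeff]
  have h : ∀ s ∈ Finset.univ.powersetCard k,
      (∏ i ∈ s, (Polynomial.X + Polynomial.C (x i))).coeff k = 1 := by
    intro s hs
    have hm : (∏ i ∈ s, (Polynomial.X + Polynomial.C (x i))).Monic :=
      monic_prod_of_monic _ _ fun i _ => monic_X_add_C (x i)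
    have hd : (∏ i ∈ s, (Polynomial.X + Polynomial.C (x i))).natDegree = k := by
      rw [natDegree_prod_of_monic _ _ fun i _ => monic_X_add_C (x i)]
      simp [(Finset.mem_powersetCard.mp hs).2]
    have := hm.coeff_natDegree
    rwa [hd] at this
  rw [Finset.sum_congr rfl h]
  simp [Finset.card_powersetCard, Finset.card_fin]

lemma natDegree_QR (n k : ℕ) (hk : k ≤ n) (x : Fin n → ℝ) :
    (QR n k x).natDegree = k := by
  refine le_antisymm ?_ ?_
  · refine natDegree_sum_le_of_forall_le _ _ fun s hs => ?_
    refine (natDegree_prod_le _ _).trans ?_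
    have : ∀ i ∈ s, (Polynomial.X + Polynomial.C (x i)).natDegree = 1 := fun i _ =>
      natDegree_X_add_C (x i)
    rw [Finset.sum_congr rfl this]
    simp [(Finset.mem_powersetCard.mp hs).2]
  · refine le_natDegree_of_ne_zero ?_
    rw [coeff_QR]
    exact_mod_cast Nat.choose_pos hk |>.ne'
lemma QR_ne_zero (n k : ℕ) (hk : k ≤ n) (x : Fin n → ℝ) : QR n k x ≠ 0 := by
  intro h
  have h2 : ((n.choose k : ℕ) : ℝ) = 0 := by rw [← coeff_QR n k x, h]; simp
  have h3 : n.choose k = 0 := by exact_mod_cast h2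
  exact (Nat.choose_pos hk).ne' h3

lemma roots_card_QR_top (n : ℕ) (x : Fin n → ℝ) :
    Multiset.card (QR n n x).roots = n := by
  have hpc : (Finset.univ : Finset (Fin n)).powersetCard n = {Finset.univ} := by
    ext s
    simp only [Finset.mem_powersetCard, Finset.mem_singleton]
    constructor
    · rintro ⟨-, hcard⟩
      exact Finset.eq_univ_of_card s (by simpa using hcard)
    · rintro rfl
      exact ⟨Finset.subset_univ _, by simp⟩
  have h1 : QR n n x = ∏ i ∈ Finset.univ, (Polynomial.X + Polynomial.C (x i)) := by
    rw [QR, hpc, Finset.sum_singleton]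
  have h2 : (∏ i ∈ Finset.univ, (Polynomial.X + Polynomial.C (x i)))
      = (Multiset.map (fun a => Polynomial.X - Polynomial.C a)
          ((Finset.univ.val : Multiset (Fin n)).map (fun i => - x i))).prod := by
    rw [Finset.prod_eq_multiset_prod, Multiset.map_map]
    congr 1
    refine Multiset.map_congr rfl fun i _ => ?_
    simp [sub_neg_eq_add]
  rw [h1, h2, roots_multiset_prod_X_sub_C]
  simp

lemma derivative_finset_prod {ι : Type*} [DecidableEq ι] (s : Finset ι) (f : ι → Polynomial ℝ) :
    Polynomial.derivative (∏ i ∈ s, f i)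
      = ∑ i ∈ s, (∏ j ∈ s.erase i, f j) * Polynomial.derivative (f i) := by
  induction s using Finset.induction_on with
  | empty => simp
  | @insert a s ha ih =>
    have hsum : ∑ i ∈ s, (∏ j ∈ (insert a s).erase i, f j) * Polynomial.derivative (f i)
        = ∑ i ∈ s, f a * ((∏ j ∈ s.erase i, f j) * Polynomial.derivative (f i)) := by
      refine Finset.sum_congr rfl fun i hi => ?_
      rw [Finset.erase_insert_of_ne (by rintro rfl; exact ha hi),
        Finset.prod_insert (fun h => ha (Finset.mem_of_mem_erase h))]
      ring
    rw [Finset.prod_insert ha, derivative_mul, ih, Finset.sum_insert ha,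
      Finset.erase_insert ha, hsum, ← Finset.mul_sum]
    ring

lemma derivative_QR (n k : ℕ) (x : Fin n → ℝ) :
    Polynomial.derivative (QR n (k+1) x) = Polynomial.C ((n - k : ℕ) : ℝ) * QR n k x := by
  classical
  set F : Finset (Fin n) → Polynomial ℝ := fun t => ∏ j ∈ t, (Polynomial.X + Polynomial.C (x j))
    with hF
  have h1 : Polynomial.derivative (QR n (k+1) x)
      = ∑ s ∈ Finset.univ.powersetCard (k+1), ∑ i ∈ s, F (s.erase i) := by
    rw [QR, Polynomial.derivative_sum]
    refine Finset.sum_congr rfl fun s _ => ?_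
    rw [derivative_finset_prod]
    refine Finset.sum_congr rfl fun i _ => ?_
    simp [hF]
  have h2 : ∑ s ∈ Finset.univ.powersetCard (k+1), ∑ i ∈ s, F (s.erase i)
      = ∑ t ∈ Finset.univ.powersetCard k, ∑ i ∈ tᶜ, F t := by
    rw [Finset.sum_sigma', Finset.sum_sigma']
    refine Finset.sum_bij' (fun p _ => ⟨p.1.erase p.2, p.2⟩)
      (fun p _ => ⟨insert p.2 p.1, p.2⟩) ?_ ?_ ?_ ?_ ?_
    · rintro ⟨s, i⟩ hp
      simp only [Finset.mem_sigma, Finset.mem_powersetCard] at hp ⊢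
      obtain ⟨⟨hsub, hcard⟩, hi⟩ := hp
      refine ⟨⟨Finset.subset_univ _, ?_⟩, ?_⟩
      · rw [Finset.card_erase_of_mem hi, hcard]; omega
      · simp [Finset.mem_compl]
    · rintro ⟨t, i⟩ hp
      simp only [Finset.mem_sigma, Finset.mem_powersetCard, Finset.mem_compl] at hp ⊢
      obtain ⟨⟨hsub, hcard⟩, hi⟩ := hp
      refine ⟨⟨Finset.subset_univ _, ?_⟩, Finset.mem_insert_self _ _⟩
      rw [Finset.card_insert_of_notMem hi, hcard]
    · rintro ⟨s, i⟩ hp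
      simp only [Finset.mem_sigma] at hp
      simp [Finset.insert_erase hp.2]
    · rintro ⟨t, i⟩ hp
      simp only [Finset.mem_sigma, Finset.mem_compl] at hp
      simp [Finset.erase_insert hp.2]
    · rintro ⟨s, i⟩ _
      rfl
  have h3 : ∑ t ∈ Finset.univ.powersetCard k, ∑ i ∈ tᶜ, F t
      = Polynomial.C ((n - k : ℕ) : ℝ) * QR n k x := by
    rw [QR, Finset.mul_sum]
    refine Finset.sum_congr rfl fun t ht => ?_
    rw [Finset.sum_const]
    have hc : tᶜ.card = n - k := by
      rw [Finset.card_compl, (Finset.mem_powersetCard.mp ht).2]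
      simp
    rw [hc, nsmul_eq_mul]
    simp [hF, Polynomial.C_eq_natCast]
  rw [h1, h2, h3]

lemma roots_card_QR (n k : ℕ) (hk : k ≤ n) (x : Fin n → ℝ) :
    Multiset.card (QR n k x).roots = k := by
  obtain ⟨d, hd⟩ : ∃ d, k + d = n := ⟨n - k, by omega⟩
  clear hk
  induction d generalizing k with
  | zero => subst hd; simpa using roots_card_QR_top (k+0) x
  | succ d ih =>
    have hk1 : k + 1 + d = n := by omega
    have hkn : k < n := by omega
    have ih1 := ih (k+1) hk1
    refine le_antisymm ?_ ?_
    · calc Multiset.card (QR n k x).roots ≤ (QR n k x).natDegree := card_roots' _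
        _ = k := natDegree_QR n k (by omega) x
    · have hster := Polynomial.card_roots_le_derivative (QR n (k+1) x)
      rw [derivative_QR n k x, Polynomial.roots_C_mul] at hster
      · omega
      · have : (0:ℕ) < n - k := by omega
        exact_mod_cast this.ne'

lemma eval_QR_pos (n m : ℕ) (hmn : m ≤ n) (x : Fin n → ℝ)
    (hx : ∀ j, 1 ≤ j → j ≤ m → 0 < esymm n j x) :
    ∀ k, k ≤ m → ∀ r, 0 ≤ r → 0 < (QR n k x).eval r := by
  intro k
  induction k with
  | zero =>
    intro _ r _
    simp [QR, Finset.powersetCard_zero]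
  | succ k ih =>
    intro hk r hr
    have hg0 : (QR n (k+1) x).eval 0 = esymm n (k+1) x := by
      rw [eval_QR]; congr 1; funext i; ring
    have hpos0 : 0 < (QR n (k+1) x).eval 0 := by
      rw [hg0]; exact hx (k+1) (by omega) hk
    rcases eq_or_lt_of_le hr with h | h
    · rwa [← h]
    · have hmono : StrictMonoOn (fun r => (QR n (k+1) x).eval r) (Set.Ici (0:ℝ)) := by
        refine strictMonoOn_of_deriv_pos (convex_Ici 0)
          ((QR n (k+1) x).continuous.continuousOn) ?_
        intro r hr'
        rw [interior_Ici, Set.mem_Ioi] at hr'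
        rw [Polynomial.deriv, derivative_QR]
        simp only [Polynomial.eval_mul, Polynomial.eval_C]
        have h1 : (0:ℝ) < ((n - k : ℕ) : ℝ) := by
          have : (0:ℕ) < n - k := by omega
          exact_mod_cast this
        exact mul_pos h1 (ih (by omega) r hr'.le)
      have := hmono (Set.mem_Ici.mpr le_rfl) (Set.mem_Ici.mpr h.le) h
      calc (0:ℝ) < (QR n (k+1) x).eval 0 := hpos0
        _ < _ := this

lemma roots_QR_neg (n m : ℕ) (hm : 1 ≤ m) (hmn : m ≤ n) (x : Fin n → ℝ)
    (hx : ∀ j, 1 ≤ j → j ≤ m → 0 < esymm n j x) :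
    ∀ r ∈ (QR n m x).roots, r < 0 := by
  intro r hr
  by_contra h
  push_neg at h
  have h1 := eval_QR_pos n m hmn x hx m le_rfl r h
  have h2 : (QR n m x).eval r = 0 := (Polynomial.mem_roots (QR_ne_zero n m hmn x)).mp hr
  rw [h2] at h1
  exact lt_irrefl _ h1

lemma czero_QR (n k : ℕ) (hk1 : 1 ≤ k) (hk : k ≤ n) (x : Fin n → ℝ) (z : ℂ)
    (hz : cesymm n k (fun i => (x i : ℂ) + z) = 0) :
    ∃ r : ℝ, z = (r : ℂ) ∧ r ∈ (QR n k x).roots := by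
  have hA : Polynomial.aeval z (QR n k x) = 0 := by rw [aeval_QR]; exact hz
  have hsplits : (QR n k x).Splits :=
    Polynomial.splits_iff_card_roots.mpr (by rw [roots_card_QR n k hk x, natDegree_QR n k hk x])
  have hmapzero : ((QR n k x).map (algebraMap ℝ ℂ)).eval z = 0 := by
    rw [Polynomial.eval_map, ← Polynomial.aeval_def]; exact hA
  have hmapne : (QR n k x).map (algebraMap ℝ ℂ) ≠ 0 :=
    (Polynomial.map_ne_zero_iff (algebraMap ℝ ℂ).injective).mpr (QR_ne_zero n k hk x)
  have hmem : z ∈ ((QR n k x).map (algebraMap ℝ ℂ)).roots :=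
    (Polynomial.mem_roots hmapne).mpr hmapzero
  rw [hsplits.roots_map (algebraMap ℝ ℂ)] at hmem
  obtain ⟨r, hr, hrz⟩ := Multiset.mem_map.mp hmem
  exact ⟨r, hrz.symm, hr⟩

/-- The polynomial `τ ↦ cesymm n k (u + τ v)`. -/
noncomputable def PC (n k : ℕ) (u v : Fin n → ℂ) : Polynomial ℂ :=
  ∑ s ∈ Finset.univ.powersetCard k, ∏ i ∈ s, (Polynomial.C (u i) + Polynomial.C (v i) * Polynomial.X)

lemma eval_PC (n k : ℕ) (u v : Fin n → ℂ) (τ : ℂ) :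
    (PC n k u v).eval τ = cesymm n k (fun i => u i + v i * τ) := by
  simp [PC, cesymm, eval_finset_sum, eval_prod]

lemma natDegree_linear_le' (a b : ℂ) : (Polynomial.C a + Polynomial.C b * Polynomial.X).natDegree ≤ 1 := by
  refine (Polynomial.natDegree_add_le _ _).trans (max_le ?_ ?_)
  · simp
  · exact (Polynomial.natDegree_mul_le).trans (by simp)

lemma natDegree_prod_linear_le (n : ℕ) (u v : Fin n → ℂ) (s : Finset (Fin n)) :
    (∏ i ∈ s, (Polynomial.C (u i) + Polynomial.C (v i) * Polynomial.X)).natDegree ≤ s.card := by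
  refine (Polynomial.natDegree_prod_le _ _).trans ?_
  have h1 : ∑ i ∈ s, (Polynomial.C (u i) + Polynomial.C (v i) * Polynomial.X).natDegree
      ≤ ∑ _i ∈ s, 1 := Finset.sum_le_sum fun i _ => natDegree_linear_le' (u i) (v i)
  simpa using h1

lemma coeff_prod_linear (n : ℕ) (u v : Fin n → ℂ) (s : Finset (Fin n)) :
    (∏ i ∈ s, (Polynomial.C (u i) + Polynomial.C (v i) * Polynomial.X)).coeff s.card
      = ∏ i ∈ s, v i := by
  induction s using Finset.cons_induction with
  | empty => simp
  | cons a s ha ih =>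
    rw [Finset.prod_cons, Finset.card_cons, Finset.prod_cons]
    rw [add_mul, Polynomial.coeff_add, Polynomial.coeff_C_mul]
    rw [mul_assoc, Polynomial.coeff_C_mul, Polynomial.coeff_X_mul, ih]
    rw [Polynomial.coeff_eq_zero_of_natDegree_lt
      (lt_of_le_of_lt (natDegree_prod_linear_le n u v s) (Nat.lt_succ_self _))]
    ring

lemma coeff_PC (n k : ℕ) (u v : Fin n → ℂ) : (PC n k u v).coeff k = cesymm n k v := by
  rw [PC, Polynomial.finset_sum_coeff, cesymm]
  refine Finset.sum_congr rfl fun s hs => ?_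
  rw [← (Finset.mem_powersetCard.mp hs).2, coeff_prod_linear]

lemma natDegree_PC (n k : ℕ) (u v : Fin n → ℂ) (hv : cesymm n k v ≠ 0) :
    (PC n k u v).natDegree = k := by
  refine le_antisymm ?_ ?_
  · refine Polynomial.natDegree_sum_le_of_forall_le _ _ fun s hs => ?_
    exact (natDegree_prod_linear_le n u v s).trans_eq (Finset.mem_powersetCard.mp hs).2
  · exact Polynomial.le_natDegree_of_ne_zero (by rw [coeff_PC]; exact hv)

lemma PC_ne_zero (n k : ℕ) (u v : Fin n → ℂ) (hv : cesymm n k v ≠ 0) : PC n k u v ≠ 0 := by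
  intro h
  have := coeff_PC n k u v
  rw [h] at this
  simp at this
  exact hv this.symm

lemma multiset_prod_lower (s : Multiset ℝ) (h : ℝ) (h0 : 0 ≤ h) (hall : ∀ y ∈ s, h ≤ y) :
    h ^ Multiset.card s ≤ s.prod := by
  induction s using Multiset.induction_on with
  | empty => simp
  | cons a s ih =>
    rw [Multiset.card_cons, Multiset.prod_cons, pow_succ, mul_comm (h ^ Multiset.card s) h]
    have ha : h ≤ a := hall a (Multiset.mem_cons_self a s)
    have hs : h ^ Multiset.card s ≤ s.prod := ih fun y hy => hall y (Multiset.mem_cons_of_mem hy)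
    exact mul_le_mul ha hs (pow_nonneg h0 _) (h0.trans ha)

lemma key_bound (n k : ℕ) (u v : Fin n → ℂ) (hv : cesymm n k v ≠ 0) (τ : ℂ) (h : ℝ)
    (h0 : 0 ≤ h)
    (hroots : ∀ ρ : ℂ, cesymm n k (fun i => u i + v i * ρ) = 0 → h ≤ Complex.abs (τ - ρ)) :
    Complex.abs (cesymm n k v) * h ^ k ≤ Complex.abs (cesymm n k (fun i => u i + v i * τ)) := by
  set g := PC n k u v with hg
  have hdeg : g.natDegree = k := natDegree_PC n k u v hv
  have hlead : g.leadingCoeff = cesymm n k v := by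
    rw [Polynomial.leadingCoeff, hdeg, hg, coeff_PC]
  have hgne : g ≠ 0 := PC_ne_zero n k u v hv
  have hsplits : g.Splits := IsAlgClosed.splits g
  have hcard : Multiset.card g.roots = k := by
    rw [Polynomial.splits_iff_card_roots.mp hsplits, hdeg]
  have hfac := hsplits.eq_prod_roots
  have hev : Complex.abs (g.eval τ)
      = Complex.abs g.leadingCoeff * ((g.roots.map fun a => Complex.abs (τ - a)).prod) := by
    conv_lhs => rw [hfac]
    rw [Polynomial.eval_mul, Polynomial.eval_C, Polynomial.eval_multiset_prod, map_mul]
    congr 1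
    rw [Multiset.map_map]
    have h1 : (Multiset.map (Polynomial.eval τ ∘ fun a => Polynomial.X - Polynomial.C a) g.roots)
        = Multiset.map (fun a => τ - a) g.roots :=
      Multiset.map_congr rfl (fun a _ => by simp)
    rw [h1, map_multiset_prod Complex.abs, Multiset.map_map]
    simp [Function.comp]
  have hlow : h ^ k ≤ (g.roots.map fun a => Complex.abs (τ - a)).prod := by
    have := multiset_prod_lower (g.roots.map fun a => Complex.abs (τ - a)) h h0 ?_
    · rwa [Multiset.card_map, hcard] at this
    · intro y hy
      obtain ⟨ρ, hρ, rfl⟩ := Multiset.mem_map.mp hy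
      have hz : cesymm n k (fun i => u i + v i * ρ) = 0 := by
        rw [← eval_PC]
        exact (Polynomial.mem_roots hgne).mp hρ
      exact hroots ρ hz
  calc Complex.abs (cesymm n k v) * h ^ k
      ≤ Complex.abs (cesymm n k v) * (g.roots.map fun a => Complex.abs (τ - a)).prod := by
        exact mul_le_mul_of_nonneg_left hlow (Complex.abs.nonneg _)
    _ = Complex.abs (g.eval τ) := by rw [hev, hlead]
    _ = _ := by rw [eval_PC]

lemma zero_bound (n k : ℕ) (u v : Fin n → ℂ) (δ K : ℝ) (hδ : 0 < δ) (hK : 0 ≤ K)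
    (hSB : ∀ w : Fin n → ℂ, (∀ i, Complex.abs (w i) ≤ δ) → cesymm n k (fun i => v i + w i) ≠ 0)
    (hu : ∀ i, Complex.abs (u i) ≤ K) (τ : ℂ)
    (hz : cesymm n k (fun i => u i + v i * τ) = 0) :
    Complex.abs τ ≤ K / δ := by
  by_contra hlt
  push_neg at hlt
  have habs : 0 < Complex.abs τ := lt_of_le_of_lt (by positivity) hlt
  have hτ : τ ≠ 0 := by
    intro h; rw [h] at habs; simp at habs
  set w : Fin n → ℂ := fun i => u i / τ with hw
  have hK2 : K ≤ δ * Complex.abs τ := by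
    calc K = (K / δ) * δ := by field_simp
      _ ≤ Complex.abs τ * δ := mul_le_mul_of_nonneg_right hlt.le hδ.le
      _ = δ * Complex.abs τ := mul_comm _ _
  have hwb : ∀ i, Complex.abs (w i) ≤ δ := by
    intro i
    rw [hw]
    simp only [map_div₀]
    rw [div_le_iff₀ habs]
    exact (hu i).trans hK2
  have hne := hSB w hwb
  have heq : cesymm n k (fun i => u i + v i * τ) = τ ^ k * cesymm n k (fun i => v i + w i) := by
    rw [← cesymm_smul]
    congr 1
    funext i
    rw [hw]
    field_simp
    ring
  rw [heq] at hz
  exact (mul_ne_zero (pow_ne_zero _ hτ) hne) hz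

lemma clopen_Icc_all {U V : Set ℝ} (hU : IsClosed U) (hV : IsClosed V)
    (hUV : Set.Icc (0:ℝ) 1 ⊆ U ∪ V)
    (hdisj : ∀ β ∈ Set.Icc (0:ℝ) 1, ¬(β ∈ U ∧ β ∈ V))
    (c : ℝ) (hc : c ∈ Set.Icc (0:ℝ) 1) (hcU : c ∈ U) : Set.Icc (0:ℝ) 1 ⊆ U := by
  by_contra hsub
  obtain ⟨β, hβ, hβU⟩ : ∃ β ∈ Set.Icc (0:ℝ) 1, β ∉ U := by
    by_contra h
    push_neg at h
    exact hsub h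
  have hcover : Set.Icc (0:ℝ) 1 ⊆ Vᶜ ∪ Uᶜ := by
    intro y hy
    by_contra hmem
    simp only [Set.mem_union, Set.mem_compl_iff, not_or, not_not] at hmem
    exact hdisj y hy ⟨hmem.2, hmem.1⟩
  obtain ⟨y, hy, hyV, hyU⟩ := isPreconnected_Icc Vᶜ Uᶜ hV.isOpen_compl hU.isOpen_compl hcover
    ⟨c, hc, fun hcV => hdisj c hc ⟨hcU, hcV⟩⟩ ⟨β, hβ, hβU⟩
  rcases hUV hy with h | h
  · exact hyU h
  · exact hyV h

lemma no_real_zero (n m : ℕ) (hm : 1 ≤ m) (hmn : m ≤ n) (w : Fin n → ℝ) (s : ℝ) (hs : s ≠ 0) :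
    cesymm n m (fun i => (w i : ℂ) + (s : ℂ) * Complex.I) ≠ 0 := by
  intro hz
  obtain ⟨r, hr, -⟩ := czero_QR n m hm hmn w ((s : ℂ) * Complex.I) hz
  have := congrArg Complex.im hr
  simp at this
  exact hs this

lemma claim16 (n m : ℕ) (hm : 1 ≤ m) (hmn : m ≤ n) (a : Fin n → ℝ)
    (ha : a ∈ GardingCone n m) (x : Fin n → ℝ) (s : ℝ) (hs : 0 < s) :
    ∀ τ : ℂ, cesymm n m (fun i => (x i : ℂ) + (s : ℂ) * Complex.I + (a i : ℂ) * τ) = 0 →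
      τ.im < 0 := by
  have hσa : 0 < esymm n m a := ha m hm le_rfl
  have hva : cesymm n m (fun i => ((a i : ℝ) : ℂ)) ≠ 0 := by
    rw [← cesymm_ofReal]
    exact_mod_cast hσa.ne'
  have hL : 0 < Complex.abs (cesymm n m (fun i => ((a i : ℝ) : ℂ))) := by
    simpa [Complex.abs.pos_iff] using hva
  obtain ⟨δ, hδ, hSB⟩ := cesymm_delta n m _ hva
  set K : ℝ := (∑ i, |x i|) + s with hK
  have hK0 : 0 ≤ K := by positivity
  set P : ℝ → Prop := fun β => ∀ τ : ℂ,
    cesymm n m (fun i => ((β * x i : ℝ) : ℂ) + (s : ℂ) * Complex.I + (a i : ℂ) * τ) = 0 →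
      τ.im < 0 with hP
  -- uniform coefficient bound
  have hub : ∀ β ∈ Set.Icc (0:ℝ) 1, ∀ i,
      Complex.abs (((β * x i : ℝ) : ℂ) + (s : ℂ) * Complex.I) ≤ K := by
    intro β hβ i
    calc Complex.abs (((β * x i : ℝ) : ℂ) + (s : ℂ) * Complex.I)
        ≤ Complex.abs ((β * x i : ℝ) : ℂ) + Complex.abs ((s : ℂ) * Complex.I) :=
          Complex.abs.add_le _ _
      _ = |β * x i| + |s| := by
          rw [Complex.abs_ofReal]
          congr 1
          simp [map_mul, Complex.abs_ofReal, Complex.abs_I]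
      _ ≤ |x i| + s := by
          rw [abs_mul, _root_.abs_of_pos hs]
          have h1 : |β| ≤ 1 := by
            rw [_root_.abs_of_nonneg hβ.1]; exact hβ.2
          have := mul_le_of_le_one_left (abs_nonneg (x i)) h1
          linarith
      _ ≤ K := by
          rw [hK]
          have := Finset.single_le_sum (f := fun i => |x i|) (fun i _ => abs_nonneg _)
            (Finset.mem_univ i)
          linarith
  -- joint continuity
  have hcont : Continuous (fun p : ℝ × ℂ =>
      cesymm n m (fun i => ((p.1 * x i : ℝ) : ℂ) + (s : ℂ) * Complex.I + (a i : ℂ) * p.2)) := by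
    refine (cesymm_continuous n m).comp (continuous_pi fun i => ?_)
    refine Continuous.add (Continuous.add ?_ continuous_const) ?_
    · exact Complex.continuous_ofReal.comp ((continuous_fst).mul continuous_const)
    · exact continuous_const.mul continuous_snd
  -- base case
  have hbase : P 0 := by
    intro τ hz
    have hent : (fun i => ((0 * x i : ℝ) : ℂ) + (s : ℂ) * Complex.I + (a i : ℂ) * τ)
        = fun i => (s : ℂ) * Complex.I + (a i : ℂ) * τ := by
      funext i; push_cast; ring
    rw [hent] at hz
    by_cases hτ : τ = 0
    · subst hτ
      have hent2 : (fun i => (s : ℂ) * Complex.I + (a i : ℂ) * 0)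
          = fun i => ((s : ℂ) * Complex.I) * (fun _ : Fin n => (1:ℂ)) i := by
        funext i; simp
      rw [hent2, cesymm_smul, cesymm_const_one] at hz
      have h1 : ((s : ℂ) * Complex.I) ^ m ≠ 0 := by
        apply pow_ne_zero
        simp [Complex.ext_iff, hs.ne']
      have h2 : ((n.choose m : ℕ) : ℂ) ≠ 0 := by
        exact_mod_cast (Nat.choose_pos hmn).ne'
      exact absurd hz (mul_ne_zero h1 h2)
    · set z : ℂ := (s : ℂ) * Complex.I / τ with hzdef
      have hent3 : (fun i => (s : ℂ) * Complex.I + (a i : ℂ) * τ)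
          = fun i => τ * ((a i : ℂ) + z) := by
        funext i
        rw [hzdef]
        field_simp
        ring
      rw [hent3, cesymm_smul] at hz
      have hzz : cesymm n m (fun i => ((a i : ℝ) : ℂ) + z) = 0 :=
        by
          rcases mul_eq_zero.mp hz with h | h
          · exact absurd h (pow_ne_zero _ hτ)
          · exact h
      obtain ⟨r, hrz, hroot⟩ := czero_QR n m hm hmn a z hzz
      have hrneg : r < 0 := roots_QR_neg n m hm hmn a (fun j h1 h2 => ha j h1 h2) r hroot
      have hr0 : (r:ℂ) ≠ 0 := by exact_mod_cast hrneg.ne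
      have hτr : τ = (s : ℂ) * Complex.I / (r : ℂ) := by
        rw [hzdef] at hrz
        field_simp at hrz
        rw [eq_div_iff hr0, hrz]
      have him : τ.im = s / r := by
        rw [hτr]
        have : (s : ℂ) * Complex.I / (r : ℂ) = ((s / r : ℝ) : ℂ) * Complex.I := by
          push_cast; field_simp
        rw [this]
        simp
      rw [him]
      exact div_neg_of_pos_of_neg hs hrneg
  -- U and V
  set U : Set ℝ := {β | β ∈ Set.Icc (0:ℝ) 1 ∧ P β} with hUdef
  set V : Set ℝ := {β | β ∈ Set.Icc (0:ℝ) 1 ∧ ¬ P β} with hVdef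
  have hUclosed : IsClosed U := by
    refine IsSeqClosed.isClosed ?_
    intro βseq β₀ hmem htend
    have hβ₀ : β₀ ∈ Set.Icc (0:ℝ) 1 :=
      isClosed_Icc.mem_of_tendsto htend (Filter.Eventually.of_forall fun j => (hmem j).1)
    refine ⟨hβ₀, ?_⟩
    intro τ₀ hz
    by_contra him
    push_neg at him
    rcases eq_or_lt_of_le him with heq | hlt
    · -- τ₀ real : impossible
      have hτ₀ : τ₀ = ((τ₀.re : ℝ) : ℂ) := by
        apply Complex.ext <;> simp [← heq]
      rw [hτ₀] at hz
      have hent : (fun i => ((β₀ * x i : ℝ) : ℂ) + (s : ℂ) * Complex.I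
            + (a i : ℂ) * ((τ₀.re : ℝ) : ℂ))
          = fun i => ((β₀ * x i + a i * τ₀.re : ℝ) : ℂ) + (s : ℂ) * Complex.I := by
        funext i; push_cast; ring
      rw [hent] at hz
      exact no_real_zero n m hm hmn _ s hs.ne' hz
    · -- im τ₀ > 0 : separation bound
      have hbound : ∀ j, Complex.abs (cesymm n m (fun i => ((a i : ℝ) : ℂ))) * τ₀.im ^ m
          ≤ Complex.abs (cesymm n m
            (fun i => ((βseq j * x i : ℝ) : ℂ) + (s : ℂ) * Complex.I + (a i : ℂ) * τ₀)) := by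
        intro j
        refine key_bound n m (fun i => ((βseq j * x i : ℝ) : ℂ) + (s : ℂ) * Complex.I)
          (fun i => ((a i : ℝ) : ℂ)) hva τ₀ τ₀.im hlt.le ?_
        intro ρ hρ
        have hρim : ρ.im < 0 := (hmem j).2 ρ hρ
        calc τ₀.im ≤ (τ₀ - ρ).im := by simp [Complex.sub_im]; linarith
          _ ≤ |(τ₀ - ρ).im| := le_abs_self _
          _ ≤ Complex.abs (τ₀ - ρ) := Complex.abs_im_le_norm _
      have htend2 : Filter.Tendsto (fun j => Complex.abs (cesymm n m
          (fun i => ((βseq j * x i : ℝ) : ℂ) + (s : ℂ) * Complex.I + (a i : ℂ) * τ₀)))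
          Filter.atTop (nhds 0) := by
        have h1 : Filter.Tendsto (fun j => (βseq j, τ₀)) Filter.atTop (nhds (β₀, τ₀)) :=
          htend.prodMk_nhds tendsto_const_nhds
        have h2 := (hcont.tendsto (β₀, τ₀)).comp h1
        simp only [Function.comp_def] at h2
        rw [hz] at h2
        have h4 := (Complex.continuous_abs.tendsto 0).comp h2
        simpa [Function.comp_def] using h4
      have hge := ge_of_tendsto htend2 (Filter.Eventually.of_forall hbound)
      have : 0 < Complex.abs (cesymm n m (fun i => ((a i : ℝ) : ℂ))) * τ₀.im ^ m :=
        mul_pos hL (pow_pos hlt _)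
      linarith
  have hVclosed : IsClosed V := by
    refine IsSeqClosed.isClosed ?_
    intro βseq β₀ hmem htend
    have hβ₀ : β₀ ∈ Set.Icc (0:ℝ) 1 :=
      isClosed_Icc.mem_of_tendsto htend (Filter.Eventually.of_forall fun j => (hmem j).1)
    refine ⟨hβ₀, ?_⟩
    have hex : ∀ j, ∃ τ : ℂ,
        cesymm n m (fun i => ((βseq j * x i : ℝ) : ℂ) + (s : ℂ) * Complex.I + (a i : ℂ) * τ) = 0
        ∧ 0 ≤ τ.im := by
      intro j
      have h2 := (hmem j).2
      simp only [hP] at h2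
      push_neg at h2
      obtain ⟨τ, hτ1, hτ2⟩ := h2
      exact ⟨τ, hτ1, hτ2⟩
    choose τseq hzseq himseq using hex
    have hbd : ∀ j, τseq j ∈ Metric.closedBall (0:ℂ) (K / δ) := by
      intro j
      rw [Metric.mem_closedBall, dist_zero_right, Complex.norm_eq_abs]
      exact zero_bound n m _ _ δ K hδ hK0 hSB (hub (βseq j) (hmem j).1) (τseq j) (hzseq j)
    obtain ⟨tlim, -, φ, hφ, hτtend⟩ :=
      tendsto_subseq_of_bounded Metric.isBounded_closedBall hbd
    have hβtend : Filter.Tendsto (fun j => βseq (φ j)) Filter.atTop (nhds β₀) :=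
      htend.comp hφ.tendsto_atTop
    have hzero : cesymm n m
        (fun i => ((β₀ * x i : ℝ) : ℂ) + (s : ℂ) * Complex.I + (a i : ℂ) * tlim) = 0 := by
      have h1 : Filter.Tendsto (fun j => (βseq (φ j), τseq (φ j))) Filter.atTop
          (nhds (β₀, tlim)) := hβtend.prodMk_nhds hτtend
      have h2 := (hcont.tendsto (β₀, tlim)).comp h1
      simp only [Function.comp_def] at h2
      have h3 : Filter.Tendsto (fun j : ℕ => (0:ℂ)) Filter.atTop (nhds 0) :=
        tendsto_const_nhds
      have h6 : (fun j => cesymm n m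
          (fun i => ((βseq (φ j) * x i : ℝ) : ℂ) + (s : ℂ) * Complex.I + (a i : ℂ) * τseq (φ j)))
          = fun _ => (0:ℂ) := funext fun j => hzseq (φ j)
      rw [h6] at h2
      exact tendsto_nhds_unique h2 h3
    have himtlim : 0 ≤ tlim.im := by
      have h1 : Filter.Tendsto (fun j => (τseq (φ j)).im) Filter.atTop (nhds tlim.im) :=
        (Complex.continuous_im.tendsto tlim).comp hτtend
      exact ge_of_tendsto h1 (Filter.Eventually.of_forall fun j => himseq (φ j))
    intro hPβ₀
    exact absurd (hPβ₀ tlim hzero) (not_lt.mpr himtlim)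
  have hcover : Set.Icc (0:ℝ) 1 ⊆ U ∪ V := by
    intro β hβ
    by_cases h : P β
    · exact Or.inl ⟨hβ, h⟩
    · exact Or.inr ⟨hβ, h⟩
  have hdisj : ∀ β ∈ Set.Icc (0:ℝ) 1, ¬(β ∈ U ∧ β ∈ V) := by
    rintro β _ ⟨h1, h2⟩
    exact h2.2 h1.2
  have h0U : (0:ℝ) ∈ U := ⟨⟨le_rfl, zero_le_one⟩, hbase⟩
  have hsub := clopen_Icc_all hUclosed hVclosed hcover hdisj 0 ⟨le_rfl, zero_le_one⟩ h0U
  have h1U : (1:ℝ) ∈ U := hsub ⟨zero_le_one, le_rfl⟩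
  intro τ hz
  refine h1U.2 τ ?_
  have : (fun i => ((1 * x i : ℝ) : ℂ) + (s : ℂ) * Complex.I + (a i : ℂ) * τ)
      = fun i => ((x i : ℝ) : ℂ) + (s : ℂ) * Complex.I + (a i : ℂ) * τ := by
    funext i; norm_num
  rw [this]
  exact hz

lemma cesymm_conj (n m : ℕ) (y a : Fin n → ℝ) (τ : ℂ) :
    (starRingEnd ℂ) (cesymm n m (fun i => (y i : ℂ) + (a i : ℂ) * τ))
      = cesymm n m (fun i => (y i : ℂ) + (a i : ℂ) * ((starRingEnd ℂ) τ)) := by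
  unfold cesymm
  rw [map_sum]
  refine Finset.sum_congr rfl fun s _ => ?_
  rw [map_prod]
  refine Finset.prod_congr rfl fun i _ => ?_
  simp [map_add, map_mul, Complex.conj_ofReal]

lemma lemB (n m : ℕ) (hm : 1 ≤ m) (hmn : m ≤ n) (a : Fin n → ℝ) (ha : a ∈ GardingCone n m)
    (y : Fin n → ℝ) :
    ∀ τ : ℂ, cesymm n m (fun i => (y i : ℂ) + (a i : ℂ) * τ) = 0 → τ.im = 0 := by
  have hσa : 0 < esymm n m a := ha m hm le_rfl
  have hva : cesymm n m (fun i => ((a i : ℝ) : ℂ)) ≠ 0 := by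
    rw [← cesymm_ofReal]
    exact_mod_cast hσa.ne'
  have hL : 0 < Complex.abs (cesymm n m (fun i => ((a i : ℝ) : ℂ))) := by
    simpa [Complex.abs.pos_iff] using hva
  have hpos : ∀ τ : ℂ, 0 < τ.im →
      cesymm n m (fun i => (y i : ℂ) + (a i : ℂ) * τ) ≠ 0 := by
    intro τ him hz
    have hb : ∀ s : ℝ, 0 < s →
        Complex.abs (cesymm n m (fun i => ((a i : ℝ) : ℂ))) * τ.im ^ m
          ≤ Complex.abs (cesymm n m
            (fun i => ((y i : ℝ) : ℂ) + (s : ℂ) * Complex.I + (a i : ℂ) * τ)) := by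
      intro s hs
      refine key_bound n m (fun i => ((y i : ℝ) : ℂ) + (s : ℂ) * Complex.I)
        (fun i => ((a i : ℝ) : ℂ)) hva τ τ.im him.le ?_
      intro ρ hρ
      have hρim : ρ.im < 0 := claim16 n m hm hmn a ha y s hs ρ hρ
      calc τ.im ≤ (τ - ρ).im := by simp [Complex.sub_im]; linarith
        _ ≤ |(τ - ρ).im| := le_abs_self _
        _ ≤ Complex.abs (τ - ρ) := Complex.abs_im_le_norm _
    -- let s → 0
    have hcont : Continuous (fun s : ℝ =>
        cesymm n m (fun i => ((y i : ℝ) : ℂ) + (s : ℂ) * Complex.I + (a i : ℂ) * τ)) := by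
      refine (cesymm_continuous n m).comp (continuous_pi fun i => ?_)
      refine Continuous.add (Continuous.add continuous_const ?_) continuous_const
      exact (Complex.continuous_ofReal.mul continuous_const)
    have hseq : Filter.Tendsto (fun j : ℕ => ((j:ℝ)+1)⁻¹) Filter.atTop (nhds 0) :=
      tendsto_one_div_add_atTop_nhds_zero_nat.congr (fun j => by rw [one_div])
    have hval : Filter.Tendsto (fun j : ℕ => Complex.abs (cesymm n m
        (fun i => ((y i : ℝ) : ℂ) + ((((j:ℝ)+1)⁻¹ : ℝ) : ℂ) * Complex.I + (a i : ℂ) * τ)))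
        Filter.atTop (nhds 0) := by
      have h1 := (hcont.tendsto 0).comp hseq
      simp only [Function.comp_def] at h1
      have h2 : cesymm n m (fun i => ((y i : ℝ) : ℂ) + ((0:ℝ) : ℂ) * Complex.I + (a i : ℂ) * τ)
          = cesymm n m (fun i => (y i : ℂ) + (a i : ℂ) * τ) := by
        congr 1; funext i; simp
      rw [h2, hz] at h1
      have h4 := (Complex.continuous_abs.tendsto 0).comp h1
      simpa [Function.comp_def] using h4
    have hge := ge_of_tendsto hval (Filter.Eventually.of_forall fun j => hb _ (by positivity))
    have hc : 0 < Complex.abs (cesymm n m (fun i => ((a i : ℝ) : ℂ))) * τ.im ^ m :=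
      mul_pos hL (pow_pos him _)
    linarith
  intro τ hz
  by_contra him
  rcases lt_or_gt_of_ne him with hlt | hgt
  · have h2 : cesymm n m (fun i => (y i : ℂ) + (a i : ℂ) * ((starRingEnd ℂ) τ)) = 0 := by
      rw [← cesymm_conj, hz, map_zero]
    have h3 : 0 < ((starRingEnd ℂ) τ).im := by
      rw [Complex.conj_im]
      linarith
    exact hpos _ h3 h2
  · exact hpos τ hgt hz

lemma lemC (n m : ℕ) (hm : 1 ≤ m) (hmn : m ≤ n) (a b : Fin n → ℝ)
    (ha : a ∈ GardingCone n m) (hb : b ∈ GardingCone n m) :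
    ∀ τ : ℂ, cesymm n m (fun i => (b i : ℂ) + (a i : ℂ) * τ) = 0 →
      ∃ r : ℝ, τ = (r : ℂ) ∧ r < 0 := by
  have hσa : 0 < esymm n m a := ha m hm le_rfl
  have hva : cesymm n m (fun i => ((a i : ℝ) : ℂ)) ≠ 0 := by
    rw [← cesymm_ofReal]
    exact_mod_cast hσa.ne'
  have hL : 0 < Complex.abs (cesymm n m (fun i => ((a i : ℝ) : ℂ))) := by
    simpa [Complex.abs.pos_iff] using hva
  obtain ⟨δ, hδ, hSB⟩ := cesymm_delta n m _ hva
  set K : ℝ := (∑ i, |b i|) + 1 with hKdef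
  have hK0 : 0 ≤ K := by positivity
  set pth : ℝ → Fin n → ℝ := fun θ i => (1-θ) * b i + θ with hpth
  have hub : ∀ θ ∈ Set.Icc (0:ℝ) 1, ∀ i, Complex.abs ((pth θ i : ℝ) : ℂ) ≤ K := by
    intro θ hθ i
    rw [Complex.abs_ofReal, hpth]
    have h1 : |1 - θ| ≤ 1 := by
      rw [abs_le]; constructor <;> [linarith [hθ.2]; linarith [hθ.1]]
    have h2 : |(1-θ) * b i + θ| ≤ |(1-θ) * b i| + |θ| := abs_add_le _ _
    have h3 : |(1-θ)*b i| ≤ |b i| := by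
      rw [abs_mul]
      exact mul_le_of_le_one_left (abs_nonneg _) h1
    have h4 : |θ| ≤ 1 := by
      rw [abs_le]; exact ⟨by linarith [hθ.1], hθ.2⟩
    have h5 : |b i| ≤ ∑ i, |b i| :=
      Finset.single_le_sum (f := fun i => |b i|) (fun i _ => abs_nonneg _) (Finset.mem_univ i)
    rw [hKdef]
    simp only at h2 ⊢
    linarith
  have hpath : ∀ θ ∈ Set.Icc (0:ℝ) 1, 0 < esymm n m (pth θ) := by
    intro θ hθ
    rcases eq_or_lt_of_le hθ.2 with h1 | h1
    · have : pth θ = fun _ => 1 := by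
        funext i; rw [hpth]; simp [← h1]
      rw [this, esymm_const_one]
      exact_mod_cast Nat.choose_pos hmn
    · have hx : ∀ j, 1 ≤ j → j ≤ m → 0 < esymm n j (fun i => (1-θ) * b i) := by
        intro j hj1 hj2
        rw [esymm_smul]
        exact mul_pos (pow_pos (by linarith) _) (hb j hj1 hj2)
      have := eval_QR_pos n m hmn (fun i => (1-θ) * b i) hx m le_rfl θ hθ.1
      rwa [eval_QR] at this
  set Q : ℝ → Prop := fun θ => ∀ τ : ℂ,
    cesymm n m (fun i => ((pth θ i : ℝ) : ℂ) + (a i : ℂ) * τ) = 0 →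
      ∃ r : ℝ, τ = (r : ℂ) ∧ r < 0 with hQ
  have hcont : Continuous (fun p : ℝ × ℂ =>
      cesymm n m (fun i => ((pth p.1 i : ℝ) : ℂ) + (a i : ℂ) * p.2)) := by
    refine (cesymm_continuous n m).comp (continuous_pi fun i => ?_)
    refine Continuous.add (Complex.continuous_ofReal.comp ?_) (continuous_const.mul continuous_snd)
    rw [hpth]
    fun_prop
  -- base case θ = 1
  have hbase : Q 1 := by
    intro τ hz
    have hent : (fun i => ((pth 1 i : ℝ) : ℂ) + (a i : ℂ) * τ)
        = fun i => 1 + (a i : ℂ) * τ := by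
      funext i; rw [hpth]; norm_num
    rw [hent] at hz
    by_cases hτ : τ = 0
    · subst hτ
      exfalso
      have : (fun i => 1 + (a i : ℂ) * 0) = fun _ : Fin n => (1:ℂ) := by funext i; simp
      rw [this, cesymm_const_one] at hz
      exact (Nat.cast_ne_zero.mpr (Nat.choose_pos hmn).ne') hz
    · set z : ℂ := τ⁻¹ with hzdef
      have hent2 : (fun i => 1 + (a i : ℂ) * τ) = fun i => τ * ((a i : ℂ) + z) := by
        funext i; rw [hzdef]; field_simp; ring
      rw [hent2, cesymm_smul] at hz
      have hzz : cesymm n m (fun i => ((a i : ℝ) : ℂ) + z) = 0 := by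
        rcases mul_eq_zero.mp hz with h | h
        · exact absurd h (pow_ne_zero _ hτ)
        · exact h
      obtain ⟨r, hrz, hroot⟩ := czero_QR n m hm hmn a z hzz
      have hrneg : r < 0 := roots_QR_neg n m hm hmn a (fun j h1 h2 => ha j h1 h2) r hroot
      refine ⟨r⁻¹, ?_, inv_lt_zero.mpr hrneg⟩
      rw [hzdef] at hrz
      rw [Complex.ofReal_inv, ← hrz, inv_inv]
  -- U and V
  set U : Set ℝ := {θ | θ ∈ Set.Icc (0:ℝ) 1 ∧ Q θ} with hUdef
  set V : Set ℝ := {θ | θ ∈ Set.Icc (0:ℝ) 1 ∧ ¬ Q θ} with hVdef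
  have hUclosed : IsClosed U := by
    refine IsSeqClosed.isClosed ?_
    intro θseq θ₀ hmem htend
    have hθ₀ : θ₀ ∈ Set.Icc (0:ℝ) 1 :=
      isClosed_Icc.mem_of_tendsto htend (Filter.Eventually.of_forall fun j => (hmem j).1)
    refine ⟨hθ₀, ?_⟩
    intro τ₀ hz
    have himτ₀ : τ₀.im = 0 := lemB n m hm hmn a ha (pth θ₀) τ₀ hz
    have hτ₀re : τ₀ = ((τ₀.re : ℝ) : ℂ) := by
      apply Complex.ext <;> simp [himτ₀]
    set ρ₀ : ℝ := τ₀.re with hρ₀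
    by_contra hno
    have hρ₀nonneg : 0 ≤ ρ₀ := by
      by_contra hneg
      push_neg at hneg
      exact hno ⟨ρ₀, hτ₀re, hneg⟩
    rcases eq_or_lt_of_le hρ₀nonneg with heq | hlt
    · -- ρ₀ = 0 : value is esymm of path, positive
      have hτ0 : τ₀ = 0 := by
        rw [hτ₀re, ← heq]; simp
      rw [hτ0] at hz
      have hent : (fun i => ((pth θ₀ i : ℝ) : ℂ) + (a i : ℂ) * 0)
          = fun i => ((pth θ₀ i : ℝ) : ℂ) := by
        funext i; simp
      rw [hent, ← cesymm_ofReal] at hz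
      have := hpath θ₀ hθ₀
      rw [show esymm n m (pth θ₀) = 0 by exact_mod_cast hz] at this
      exact lt_irrefl _ this
    · -- ρ₀ > 0 : separation
      have hbound : ∀ j, Complex.abs (cesymm n m (fun i => ((a i : ℝ) : ℂ))) * ρ₀ ^ m
          ≤ Complex.abs (cesymm n m
            (fun i => ((pth (θseq j) i : ℝ) : ℂ) + (a i : ℂ) * τ₀)) := by
        intro j
        refine key_bound n m (fun i => ((pth (θseq j) i : ℝ) : ℂ))
          (fun i => ((a i : ℝ) : ℂ)) hva τ₀ ρ₀ hlt.le ?_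
        intro ρ hρ
        obtain ⟨r, hrz, hrneg⟩ := (hmem j).2 ρ hρ
        rw [hτ₀re, hrz, ← Complex.ofReal_sub, Complex.abs_ofReal]
        rw [abs_of_pos (by linarith : (0:ℝ) < ρ₀ - r)]
        linarith
      have htend2 : Filter.Tendsto (fun j => Complex.abs (cesymm n m
          (fun i => ((pth (θseq j) i : ℝ) : ℂ) + (a i : ℂ) * τ₀)))
          Filter.atTop (nhds 0) := by
        have h1 : Filter.Tendsto (fun j => (θseq j, τ₀)) Filter.atTop (nhds (θ₀, τ₀)) :=
          htend.prodMk_nhds tendsto_const_nhds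
        have h2 := (hcont.tendsto (θ₀, τ₀)).comp h1
        simp only [Function.comp_def] at h2
        rw [hz] at h2
        have h4 := (Complex.continuous_abs.tendsto 0).comp h2
        simpa [Function.comp_def] using h4
      have hge := ge_of_tendsto htend2 (Filter.Eventually.of_forall hbound)
      have hc : 0 < Complex.abs (cesymm n m (fun i => ((a i : ℝ) : ℂ))) * ρ₀ ^ m :=
        mul_pos hL (pow_pos hlt _)
      linarith
  have hVclosed : IsClosed V := by
    refine IsSeqClosed.isClosed ?_
    intro θseq θ₀ hmem htend
    have hθ₀ : θ₀ ∈ Set.Icc (0:ℝ) 1 :=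
      isClosed_Icc.mem_of_tendsto htend (Filter.Eventually.of_forall fun j => (hmem j).1)
    refine ⟨hθ₀, ?_⟩
    have hex : ∀ j, ∃ r : ℝ,
        cesymm n m (fun i => ((pth (θseq j) i : ℝ) : ℂ) + (a i : ℂ) * (r : ℂ)) = 0
        ∧ 0 ≤ r := by
      intro j
      have h2 := (hmem j).2
      simp only [hQ] at h2
      push_neg at h2
      obtain ⟨τ, hτ1, hτ2⟩ := h2
      have himτ : τ.im = 0 := lemB n m hm hmn a ha (pth (θseq j)) τ hτ1
      have hτre : τ = ((τ.re : ℝ) : ℂ) := by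
        apply Complex.ext <;> simp [himτ]
      refine ⟨τ.re, by rw [← hτre]; exact hτ1, ?_⟩
      by_contra hneg
      push_neg at hneg
      exact absurd (hτ2 τ.re hτre) (not_le.mpr hneg)
    choose rseq hzseq hrnonneg using hex
    have hbd : ∀ j, rseq j ∈ Metric.closedBall (0:ℝ) (K / δ) := by
      intro j
      rw [Metric.mem_closedBall, dist_zero_right, Real.norm_eq_abs,
        ← Complex.abs_ofReal]
      exact zero_bound n m _ _ δ K hδ hK0 hSB (hub (θseq j) (hmem j).1) ((rseq j : ℝ) : ℂ)
        (hzseq j)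
    obtain ⟨rlim, -, φ, hφ, hrtend⟩ :=
      tendsto_subseq_of_bounded Metric.isBounded_closedBall hbd
    have hθtend : Filter.Tendsto (fun j => θseq (φ j)) Filter.atTop (nhds θ₀) :=
      htend.comp hφ.tendsto_atTop
    have hzero : cesymm n m
        (fun i => ((pth θ₀ i : ℝ) : ℂ) + (a i : ℂ) * ((rlim : ℝ) : ℂ)) = 0 := by
      have hctend : Filter.Tendsto (fun j => ((rseq (φ j) : ℝ) : ℂ)) Filter.atTop
          (nhds ((rlim : ℝ) : ℂ)) :=
        (Complex.continuous_ofReal.tendsto rlim).comp hrtend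
      have h1 : Filter.Tendsto (fun j => (θseq (φ j), ((rseq (φ j) : ℝ) : ℂ))) Filter.atTop
          (nhds (θ₀, ((rlim : ℝ) : ℂ))) := hθtend.prodMk_nhds hctend
      have h2 := (hcont.tendsto (θ₀, ((rlim : ℝ) : ℂ))).comp h1
      simp only [Function.comp_def] at h2
      have h6 : (fun j => cesymm n m
          (fun i => ((pth (θseq (φ j)) i : ℝ) : ℂ) + (a i : ℂ) * ((rseq (φ j) : ℝ) : ℂ)))
          = fun _ => (0:ℂ) := funext fun j => hzseq (φ j)
      rw [h6] at h2
      exact tendsto_nhds_unique h2 tendsto_const_nhds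
    have hrlim : 0 ≤ rlim :=
      ge_of_tendsto hrtend (Filter.Eventually.of_forall fun j => hrnonneg (φ j))
    intro hQθ₀
    obtain ⟨r', hr'1, hr'2⟩ := hQθ₀ ((rlim : ℝ) : ℂ) hzero
    have : rlim = r' := by exact_mod_cast hr'1
    linarith
  have hcover : Set.Icc (0:ℝ) 1 ⊆ U ∪ V := by
    intro θ hθ
    by_cases h : Q θ
    · exact Or.inl ⟨hθ, h⟩
    · exact Or.inr ⟨hθ, h⟩
  have hdisj : ∀ θ ∈ Set.Icc (0:ℝ) 1, ¬(θ ∈ U ∧ θ ∈ V) := by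
    rintro θ _ ⟨h1, h2⟩
    exact h2.2 h1.2
  have h1U : (1:ℝ) ∈ U := ⟨⟨zero_le_one, le_rfl⟩, hbase⟩
  have hsub := clopen_Icc_all hUclosed hVclosed hcover hdisj 1 ⟨zero_le_one, le_rfl⟩ h1U
  have h0U : (0:ℝ) ∈ U := hsub ⟨le_rfl, zero_le_one⟩
  intro τ hz
  refine h0U.2 τ ?_
  have hent : (fun i => ((pth 0 i : ℝ) : ℂ) + (a i : ℂ) * τ)
      = fun i => ((b i : ℝ) : ℂ) + (a i : ℂ) * τ := by
    funext i; rw [hpth]; norm_num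
  rw [hent]
  exact hz

lemma main_pos (n m : ℕ) (hm : 1 ≤ m) (hmn : m ≤ n) (a b : Fin n → ℝ)
    (ha : a ∈ GardingCone n m) (hb : b ∈ GardingCone n m) :
    0 < esymm n m (fun i => a i + b i) := by
  set F : ℝ → ℝ := fun r => esymm n m (fun i => b i + r * a i) with hF
  have hFcont : Continuous F := by
    rw [hF]
    unfold esymm
    refine continuous_finset_sum _ fun s _ => continuous_finset_prod _ fun i _ => ?_
    exact continuous_const.add (continuous_id.mul continuous_const)
  have hF0 : F 0 = esymm n m b := by
    rw [hF]
    simp only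
    congr 1
    funext i
    ring
  have hF0pos : 0 < F 0 := by rw [hF0]; exact hb m hm le_rfl
  have hFnozero : ∀ r ∈ Set.Icc (0:ℝ) 1, F r ≠ 0 := by
    intro r hr hzero
    have hc : cesymm n m (fun i => ((b i : ℝ) : ℂ) + ((a i : ℝ) : ℂ) * ((r : ℝ) : ℂ)) = 0 := by
      have h1 : ((F r : ℝ) : ℂ) = cesymm n m
          (fun i => ((b i : ℝ) : ℂ) + ((a i : ℝ) : ℂ) * ((r : ℝ) : ℂ)) := by
        rw [hF]
        simp only
        rw [cesymm_ofReal]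
        congr 1
        funext i
        push_cast
        ring
      rw [← h1, hzero]
      simp
    obtain ⟨r', hr'1, hr'2⟩ := lemC n m hm hmn a b ha hb _ hc
    have : r = r' := by exact_mod_cast hr'1
    linarith [hr.1]
  have hF1pos : 0 < F 1 := by
    by_contra hle
    push_neg at hle
    have hne : F 1 ≠ 0 := hFnozero 1 ⟨zero_le_one, le_rfl⟩
    have hlt : F 1 < 0 := lt_of_le_of_ne hle hne
    have hIVT := intermediate_value_Icc' (zero_le_one (α := ℝ)) hFcont.continuousOn
    have h0mem : (0:ℝ) ∈ Set.Icc (F 1) (F 0) := ⟨hlt.le, hF0pos.le⟩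
    obtain ⟨c, hc1, hc2⟩ := hIVT h0mem
    exact hFnozero c hc1 hc2
  have : esymm n m (fun i => a i + b i) = F 1 := by
    rw [hF]
    simp only
    congr 1
    funext i
    ring
  rw [this]
  exact hF1pos

/-- For `1 ≤ m ≤ n`, the cone `Γ_m` is convex. -/
theorem stmt2 (n m : ℕ) (h1 : 1 ≤ m) (hmn : m ≤ n) :
    Convex ℝ (GardingCone n m) := by
  intro a ha b hb wa wb hwa hwb hsum
  intro k hk1 hkm
  rcases eq_or_lt_of_le hwa with hwa0 | hwa0
  · have hwb1 : wb = 1 := by linarith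
    have hab : wa • a + wb • b = b := by
      funext i; simp [← hwa0, hwb1]
    rw [hab]
    exact hb k hk1 hkm
  rcases eq_or_lt_of_le hwb with hwb0 | hwb0
  · have hwa1 : wa = 1 := by linarith
    have hab : wa • a + wb • b = a := by
      funext i; simp [← hwb0, hwa1]
    rw [hab]
    exact ha k hk1 hkm
  · have hkn : k ≤ n := le_trans hkm hmn
    have ha' : (fun i => wa * a i) ∈ GardingCone n k := by
      intro j hj1 hj2
      rw [esymm_smul]
      exact mul_pos (pow_pos hwa0 _) (ha j hj1 (le_trans hj2 hkm))
    have hb' : (fun i => wb * b i) ∈ GardingCone n k := by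
      intro j hj1 hj2
      rw [esymm_smul]
      exact mul_pos (pow_pos hwb0 _) (hb j hj1 (le_trans hj2 hkm))
    have hmain := main_pos n k hk1 hkn (fun i => wa * a i) (fun i => wb * b i) ha' hb'
    have hent : (wa • a + wb • b) = fun i => (wa * a i) + (wb * b i) := by
      funext i
      simp [Pi.add_apply, Pi.smul_apply, smul_eq_mul]
    rw [hent]
    exact hmain
end

section
/- Let Ω ⊂ ℂⁿ be bounded open and let h be continuous on the closure of Ω, harmonic in Ω, with h restricted to ∂Ω equal to φ. Suppose there exist functions a (superharmonic on Ω, continuous on the closure) and b (subharmonic on Ω, continuous on the closure) with b ≤ h ≤ a on the closure of Ω, a = b = φ on ∂Ω, and both a, b ∈ Lip_τ of the closure of Ω. Then there is K₁ > 0 with |h(z) − h(ξ)| ≤ K₁|z−ξ|^τ for all z in the closure of Ω and ξ ∈ ∂Ω, and consequently h ∈ Lip_τ of the closure of Ω. -/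
open Real MeasureTheory Metric

/-- Subharmonicity on `s` (sub-mean-value definition). -/
def SubharmonicOn {d : ℕ} (f : EuclideanSpace ℝ (Fin d) → ℝ)
    (s : Set (EuclideanSpace ℝ (Fin d))) : Prop :=
  UpperSemicontinuousOn f s ∧
    ∀ x ∈ s, ∀ r > 0, closedBall x r ⊆ s → f x ≤ ⨍ y in closedBall x r, f y

/-- Superharmonicity on `s` (super-mean-value definition). -/
def SuperharmonicOn {d : ℕ} (f : EuclideanSpace ℝ (Fin d) → ℝ)
    (s : Set (EuclideanSpace ℝ (Fin d))) : Prop :=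
  LowerSemicontinuousOn f s ∧
    ∀ x ∈ s, ∀ r > 0, closedBall x r ⊆ s → (⨍ y in closedBall x r, f y) ≤ f x

/-- Harmonicity on `s` (mean-value definition). -/
def HarmonicOn {d : ℕ} (f : EuclideanSpace ℝ (Fin d) → ℝ)
    (s : Set (EuclideanSpace ℝ (Fin d))) : Prop :=
  ContinuousOn f s ∧
    ∀ x ∈ s, ∀ r > 0, closedBall x r ⊆ s → f x = ⨍ y in closedBall x r, f y


section Aux
open Set

lemma setIntegral_translate {d : ℕ} (f : EuclideanSpace ℝ (Fin d) → ℝ)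
    (t x : EuclideanSpace ℝ (Fin d)) (r : ℝ) :
    ∫ y in closedBall (x + t) r, f y = ∫ y in closedBall x r, f (y + t) := by
  rw [← integral_indicator measurableSet_closedBall,
      ← integral_indicator measurableSet_closedBall,
      ← integral_add_right_eq_self ((closedBall (x + t) r).indicator f) t]
  congr 1
  ext y
  have : y + t ∈ closedBall (x + t) r ↔ y ∈ closedBall x r := by
    simp [mem_closedBall, dist_add_right]
  by_cases hy : y ∈ closedBall x r <;>
    simp [indicator, this, hy]

lemma measure_closedBall_translate {d : ℕ} (t x : EuclideanSpace ℝ (Fin d)) (r : ℝ) :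
    volume (closedBall (x + t) r) = volume (closedBall x r) := by
  have : (fun y => y + t) ⁻¹' closedBall (x + t) r = closedBall x r := by
    ext y; simp [mem_closedBall, dist_add_right]
  rw [← this, measure_preimage_add_right]

lemma setAverage_translate {d : ℕ} (f : EuclideanSpace ℝ (Fin d) → ℝ)
    (t x : EuclideanSpace ℝ (Fin d)) (r : ℝ) :
    ⨍ y in closedBall (x + t) r, f y = ⨍ y in closedBall x r, f (y + t) := by
  rw [setAverage_eq, setAverage_eq, setIntegral_translate, measureReal_def, measureReal_def,
    measure_closedBall_translate]

lemma max_principle {d : ℕ} (e : EuclideanSpace ℝ (Fin d)) (he : ‖e‖ = 1)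
    (U : Set (EuclideanSpace ℝ (Fin d))) (hUo : IsOpen U) (hUb : Bornology.IsBounded U)
    (u : EuclideanSpace ℝ (Fin d) → ℝ) (huc : ContinuousOn u (closure U))
    (humv : ∀ x ∈ U, ∀ r > 0, closedBall x r ⊆ U → u x ≤ ⨍ y in closedBall x r, u y)
    (M : ℝ) (hM : ∀ x ∈ frontier U, u x ≤ M) :
    ∀ x ∈ closure U, u x ≤ M := by
  classical
  by_contra hcon
  push_neg at hcon
  obtain ⟨x', hx', hx'M⟩ := hcon
  have hcomp : IsCompact (closure U) := hUb.isCompact_closure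
  obtain ⟨x₀, hx₀, hmax⟩ := hcomp.exists_isMaxOn ⟨x', hx'⟩ huc
  set m := u x₀ with hm
  have hmM : M < m := lt_of_lt_of_le hx'M (hmax hx')
  set S := closure U ∩ u ⁻¹' {m} with hS
  have hScl : IsClosed S :=
    huc.preimage_isClosed_of_isClosed isClosed_closure isClosed_singleton
  have hScomp : IsCompact S := hcomp.of_isClosed_subset hScl inter_subset_left
  have hSU : S ⊆ U := by
    intro x hx
    rcases (closure_eq_interior_union_frontier U ▸ hx.1) with hxi | hxf
    · rwa [hUo.interior_eq] at hxi
    · exact absurd hx.2 (by simpa using (lt_of_le_of_lt (hM x hxf) hmM).ne)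
  obtain ⟨x₁, hx₁S, hx₁max⟩ :=
    hScomp.exists_isMaxOn ⟨x₀, hx₀, rfl⟩ continuous_norm.continuousOn
  have hx₁U : x₁ ∈ U := hSU hx₁S
  have hux₁ : u x₁ = m := hx₁S.2
  obtain ⟨ε, hε, hball⟩ := Metric.isOpen_iff.mp hUo x₁ hx₁U
  set r := ε / 2 with hr
  have hr0 : 0 < r := by positivity
  have hBU : closedBall x₁ r ⊆ U :=
    (closedBall_subset_ball (by linarith)).trans hball
  obtain ⟨e', he'norm⟩ : ∃ e' : EuclideanSpace ℝ (Fin d),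
      ‖x₁ + (r / 2) • e'‖ = ‖x₁‖ + r / 2 ∧ ‖(r / 2) • e'‖ = r / 2 := by
    by_cases hx₁0 : x₁ = 0
    · exact ⟨e, by simp [hx₁0, norm_smul, he, abs_of_nonneg hr0.le, abs_div], by
        simp [norm_smul, he, abs_of_nonneg hr0.le, abs_div]⟩
    · refine ⟨‖x₁‖⁻¹ • x₁, ?_, ?_⟩
      · have h1 : x₁ + (r / 2) • ‖x₁‖⁻¹ • x₁ = (1 + r / 2 * ‖x₁‖⁻¹) • x₁ := by
          rw [add_smul, one_smul, smul_smul]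
        rw [h1, norm_smul, Real.norm_eq_abs,
          abs_of_nonneg (by positivity : (0:ℝ) ≤ 1 + r / 2 * ‖x₁‖⁻¹), add_mul, one_mul,
          mul_assoc, inv_mul_cancel₀ (norm_ne_zero_iff.mpr hx₁0), mul_one]
      · rw [norm_smul, norm_smul, Real.norm_eq_abs, Real.norm_eq_abs,
          abs_of_nonneg (inv_nonneg.mpr (norm_nonneg x₁)),
          abs_of_nonneg (by linarith : (0:ℝ) ≤ r / 2),
          inv_mul_cancel₀ (norm_ne_zero_iff.mpr hx₁0), mul_one]
  obtain ⟨hynorm, hesmul⟩ := he'norm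
  set y := x₁ + (r / 2) • e' with hy
  have hyB : y ∈ closedBall x₁ r := by
    rw [hy, mem_closedBall, dist_self_add_left, hesmul]; linarith
  have hyU : y ∈ U := hBU hyB
  have huym : u y ≤ m := hmax (subset_closure hyU)
  have hyltm : u y < m := by
    rcases lt_or_eq_of_le huym with hlt | heq
    · exact hlt
    · have h2 : ‖y‖ ≤ ‖x₁‖ := hx₁max (⟨subset_closure hyU, heq⟩ : y ∈ S)
      rw [hynorm] at h2
      linarith
  -- continuity at y gives a small ball where u is below m - δ
  set δ := (m - u y) / 2 with hδ
  have hδ0 : 0 < δ := by rw [hδ]; linarith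
  have hcy : ContinuousAt u y :=
    huc.continuousAt (Filter.mem_of_superset (hUo.mem_nhds hyU) subset_closure)
  have hIio : Set.Iio (m - δ) ∈ nhds (u y) := Iio_mem_nhds (by rw [hδ]; linarith)
  obtain ⟨ε', hε'0, hε'sub⟩ := Metric.mem_nhds_iff.mp (hcy hIio)
  set ρ := min (ε' / 2) (r / 2) with hρ
  have hρ0 : 0 < ρ := lt_min (by linarith) (by linarith)
  set s := closedBall y ρ with hsdef
  have hsball : s ⊆ ball y ε' :=
    closedBall_subset_ball (lt_of_le_of_lt (min_le_left _ _) (by linarith))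
  have hdyx₁ : dist y x₁ = r / 2 := by
    rw [hy, dist_eq_norm]; simpa using hesmul
  have hsB : s ⊆ closedBall x₁ r := by
    intro x hx
    have h1 : dist x y ≤ ρ := mem_closedBall.mp hx
    have h2 : ρ ≤ r / 2 := min_le_right _ _
    have := dist_triangle x y x₁
    rw [mem_closedBall]
    rw [hdyx₁] at this
    linarith
  -- set up the integral contradiction
  set B := closedBall x₁ r with hBdef
  have hBsub : B ⊆ closure U := hBU.trans subset_closure
  have hIntu : IntegrableOn u B :=
    (huc.mono hBsub).integrableOn_compact (isCompact_closedBall _ _)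
  have hIntf : IntegrableOn (fun x => m - u x) B :=
    (integrableOn_const measure_closedBall_lt_top.ne).sub hIntu
  have hvolB : 0 < (volume B).toReal :=
    ENNReal.toReal_pos (measure_closedBall_pos _ _ hr0).ne' measure_closedBall_lt_top.ne
  have hvols : 0 < (volume s).toReal :=
    ENNReal.toReal_pos (measure_closedBall_pos _ _ hρ0).ne' measure_closedBall_lt_top.ne
  have hf0 : 0 ≤ᵐ[volume.restrict B] fun x => m - u x :=
    (ae_restrict_iff' measurableSet_closedBall).mpr
      (Filter.Eventually.of_forall fun x hx => sub_nonneg.mpr (hmax (hBsub hx)))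
  have hstep1 : δ * (volume s).toReal ≤ ∫ x in s, (m - u x) := by
    have hconst : ∫ _x in s, δ ∂volume = (volume s).toReal • δ := setIntegral_const δ
    have hmono : ∫ _x in s, δ ≤ ∫ x in s, (m - u x) := by
      refine setIntegral_mono_on (integrableOn_const measure_closedBall_lt_top.ne)
        (hIntf.mono_set hsB) measurableSet_closedBall fun x hx => ?_
      have : u x < m - δ := hε'sub (hsball hx)
      linarith
    rw [hconst] at hmono
    simpa [smul_eq_mul, mul_comm] using hmono
  have hstep2 : ∫ x in s, (m - u x) ≤ ∫ x in B, (m - u x) :=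
    setIntegral_mono_set hIntf hf0 (HasSubset.Subset.eventuallyLE hsB)
  have hintB : ∫ x in B, (m - u x) = m * (volume B).toReal - ∫ x in B, u x := by
    rw [integral_sub (integrableOn_const (C := m) measure_closedBall_lt_top.ne) hIntu,
      setIntegral_const, measureReal_def, smul_eq_mul, mul_comm]
  have havg : m ≤ ⨍ x in B, u x := hux₁ ▸ humv x₁ hx₁U r hr0 hBU
  have havg' : m * (volume B).toReal ≤ ∫ x in B, u x := by
    rw [setAverage_eq, smul_eq_mul] at havg
    calc m * (volume B).toReal ≤ ((volume B).toReal⁻¹ * ∫ x in B, u x) * (volume B).toReal :=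
          mul_le_mul_of_nonneg_right havg hvolB.le
      _ = ∫ x in B, u x := by field_simp
  nlinarith [hstep1, hstep2, hintB, havg', mul_pos hδ0 hvols]

section Main

open Set Filter

/-- Boundary Hölder estimate from the barriers. -/
lemma boundary_holder {d : ℕ} (Ω : Set (EuclideanSpace ℝ (Fin d)))
    (τ : ℝ) (hτ0 : 0 < τ)
    (h φ a b : EuclideanSpace ℝ (Fin d) → ℝ)
    (hhφ : ∀ ξ ∈ frontier Ω, h ξ = φ ξ)
    (hsqueeze : ∀ z ∈ closure Ω, b z ≤ h z ∧ h z ≤ a z)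
    (haφ : ∀ ξ ∈ frontier Ω, a ξ = φ ξ) (hbφ : ∀ ξ ∈ frontier Ω, b ξ = φ ξ)
    (Ca : ℝ) (ha_hold : ∀ z ∈ closure Ω, ∀ w ∈ closure Ω, |a z - a w| ≤ Ca * ‖z - w‖ ^ τ)
    (Cb : ℝ) (hb_hold : ∀ z ∈ closure Ω, ∀ w ∈ closure Ω, |b z - b w| ≤ Cb * ‖z - w‖ ^ τ)
    (K₁ : ℝ) (hCa : Ca ≤ K₁) (hCb : Cb ≤ K₁) :
    ∀ z ∈ closure Ω, ∀ ξ ∈ frontier Ω, |h z - h ξ| ≤ K₁ * ‖z - ξ‖ ^ τ := by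
  intro z hz ξ hξ
  have hξc : ξ ∈ closure Ω := frontier_subset_closure hξ
  have hX : (0:ℝ) ≤ ‖z - ξ‖ ^ τ := Real.rpow_nonneg (norm_nonneg _) τ
  have haξ : a ξ = h ξ := by rw [haφ ξ hξ, ← hhφ ξ hξ]
  have hbξ : b ξ = h ξ := by rw [hbφ ξ hξ, ← hhφ ξ hξ]
  rw [abs_sub_le_iff]
  constructor
  · have h1 : h z - h ξ ≤ a z - a ξ := by
      have := (hsqueeze z hz).2; rw [haξ]; linarith
    have h2 : a z - a ξ ≤ |a z - a ξ| := le_abs_self _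
    have h3 := ha_hold z hz ξ hξc
    have h4 : Ca * ‖z - ξ‖ ^ τ ≤ K₁ * ‖z - ξ‖ ^ τ := mul_le_mul_of_nonneg_right hCa hX
    linarith
  · have h1 : h ξ - h z ≤ b ξ - b z := by
      have := (hsqueeze z hz).1; rw [hbξ]; linarith
    have h2 : b ξ - b z ≤ |b ξ - b z| := le_abs_self _
    have h3 := hb_hold ξ hξc z hz
    rw [norm_sub_rev] at h3
    have h4 : Cb * ‖z - ξ‖ ^ τ ≤ K₁ * ‖z - ξ‖ ^ τ := mul_le_mul_of_nonneg_right hCb hX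
    linarith

theorem stmt5' {d : ℕ} (Ω : Set (EuclideanSpace ℝ (Fin d)))
    (hΩo : IsOpen Ω) (hΩb : Bornology.IsBounded Ω)
    (τ : ℝ) (hτ0 : 0 < τ)
    (h φ a b : EuclideanSpace ℝ (Fin d) → ℝ)
    (hhc : ContinuousOn h (closure Ω))
    (hharm : ContinuousOn h Ω ∧
      ∀ x ∈ Ω, ∀ r > 0, closedBall x r ⊆ Ω → h x = ⨍ y in closedBall x r, h y)
    (hhφ : ∀ ξ ∈ frontier Ω, h ξ = φ ξ)
    (hsqueeze : ∀ z ∈ closure Ω, b z ≤ h z ∧ h z ≤ a z)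
    (haφ : ∀ ξ ∈ frontier Ω, a ξ = φ ξ) (hbφ : ∀ ξ ∈ frontier Ω, b ξ = φ ξ)
    (Ca : ℝ) (ha_hold : ∀ z ∈ closure Ω, ∀ w ∈ closure Ω, |a z - a w| ≤ Ca * ‖z - w‖ ^ τ)
    (Cb : ℝ) (hb_hold : ∀ z ∈ closure Ω, ∀ w ∈ closure Ω, |b z - b w| ≤ Cb * ‖z - w‖ ^ τ) :
    ∃ K₁ > (0 : ℝ),
      (∀ z ∈ closure Ω, ∀ ξ ∈ frontier Ω, |h z - h ξ| ≤ K₁ * ‖z - ξ‖ ^ τ) ∧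
        ∀ z ∈ closure Ω, ∀ w ∈ closure Ω, |h z - h w| ≤ K₁ * ‖z - w‖ ^ τ := by
  set K₁ := max (max Ca Cb) 0 + 1 with hK₁def
  have hK₁0 : 0 < K₁ := by
    have := le_max_right (max Ca Cb) 0
    rw [hK₁def]; linarith
  have hCa : Ca ≤ K₁ := by
    have := (le_max_left Ca Cb).trans (le_max_left (max Ca Cb) 0); rw [hK₁def]; linarith
  have hCb : Cb ≤ K₁ := by
    have := (le_max_right Ca Cb).trans (le_max_left (max Ca Cb) 0); rw [hK₁def]; linarith
  have part1 : ∀ z ∈ closure Ω, ∀ ξ ∈ frontier Ω, |h z - h ξ| ≤ K₁ * ‖z - ξ‖ ^ τ :=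
    boundary_holder Ω τ hτ0 h φ a b hhφ hsqueeze haφ hbφ Ca ha_hold Cb hb_hold K₁ hCa hCb
  -- key interior estimate via the translation trick
  have key : ∀ z ∈ Ω, ∀ w ∈ Ω, h w - h z ≤ K₁ * ‖w - z‖ ^ τ := by
    intro z hz w hw
    by_cases htz : w - z = 0
    · have hwz : w = z := by
        have := htz; rwa [sub_eq_zero] at this
      simp [hwz, htz, Real.zero_rpow hτ0.ne']
    set t := w - z with ht
    have hte : ‖‖t‖⁻¹ • t‖ = 1 := by
      rw [norm_smul, Real.norm_eq_abs, abs_of_nonneg (inv_nonneg.mpr (norm_nonneg t)),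
        inv_mul_cancel₀ (norm_ne_zero_iff.mpr htz)]
    set U := Ω ∩ (fun x => x + t) ⁻¹' Ω with hUdef
    have hUo : IsOpen U := hΩo.inter (hΩo.preimage (continuous_add_right t))
    have hUb : Bornology.IsBounded U := hΩb.subset inter_subset_left
    have hclU : closure U ⊆ closure Ω ∩ (fun x => x + t) ⁻¹' closure Ω := by
      have hpre : closure ((fun x => x + t) ⁻¹' Ω) = (fun x => x + t) ⁻¹' closure Ω :=
        ((Homeomorph.addRight t).preimage_closure Ω).symm
      exact (closure_inter_subset_inter_closure _ _).trans (by rw [hpre])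
    set u := fun x => h (x + t) - h x with hudef
    have huc : ContinuousOn u (closure U) := by
      refine ContinuousOn.sub ?_ (hhc.mono (hclU.trans inter_subset_left))
      exact (hhc.comp (continuous_add_right t).continuousOn (fun x hx => hx)).mono
        (hclU.trans inter_subset_right)
    have humv : ∀ x ∈ U, ∀ r > 0, closedBall x r ⊆ U →
        u x ≤ ⨍ y in closedBall x r, u y := by
      intro x hx r hr hBsub
      have hB1 : closedBall x r ⊆ Ω := hBsub.trans inter_subset_left
      have hB2 : closedBall (x + t) r ⊆ Ω := by
        intro yy hyy
        have hsubB : yy - t ∈ closedBall x r := by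
          rw [mem_closedBall, dist_eq_norm] at hyy ⊢
          convert hyy using 2
          abel
        have := hBsub hsubB
        have h2 : yy - t + t ∈ Ω := this.2
        simpa using h2
      have hint1 : IntegrableOn (fun y => h (y + t)) (closedBall x r) := by
        refine ContinuousOn.integrableOn_compact (isCompact_closedBall _ _) ?_
        refine (hhc.comp (continuous_add_right t).continuousOn ?_)
        intro y hy
        exact subset_closure (hB2 (by simpa [mem_closedBall, dist_eq_norm, show y + t - (x + t) = y - x by abel] using mem_closedBall.mp hy))
      have hint2 : IntegrableOn h (closedBall x r) :=
        ContinuousOn.integrableOn_compact (isCompact_closedBall _ _)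
          (hhc.mono (hB1.trans subset_closure))
      have he1 : h x = ⨍ y in closedBall x r, h y := hharm.2 x hx.1 r hr hB1
      have he2 : h (x + t) = ⨍ y in closedBall x r, h (y + t) := by
        rw [hharm.2 (x + t) hx.2 r hr hB2, setAverage_translate]
      have havg : (⨍ y in closedBall x r, u y) =
          (⨍ y in closedBall x r, h (y + t)) - ⨍ y in closedBall x r, h y := by
        rw [setAverage_eq, setAverage_eq, setAverage_eq, ← smul_sub,
          ← integral_sub hint1 hint2]
      rw [havg, hudef, ← he1, ← he2]
    have hMb : ∀ x ∈ frontier U, u x ≤ K₁ * ‖t‖ ^ τ := by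
      intro x hx
      have hxcl : x ∈ closure U := frontier_subset_closure hx
      have hxΩc : x ∈ closure Ω := (hclU hxcl).1
      have hxtΩc : x + t ∈ closure Ω := (hclU hxcl).2
      have hxnU : x ∉ U := by
        rw [frontier, hUo.interior_eq] at hx
        exact hx.2
      have hcase : x ∉ Ω ∨ x + t ∉ Ω := by
        by_contra hcon
        push_neg at hcon
        exact hxnU ⟨hcon.1, hcon.2⟩
      rcases hcase with hc | hc
      · have hxf : x ∈ frontier Ω := by
          rw [frontier, hΩo.interior_eq]; exact ⟨hxΩc, hc⟩
        have := part1 (x + t) hxtΩc x hxf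
        have heq : x + t - x = t := by abel
        rw [heq] at this
        calc u x ≤ |h (x + t) - h x| := le_abs_self _
          _ ≤ K₁ * ‖t‖ ^ τ := this
      · have hxf : x + t ∈ frontier Ω := by
          rw [frontier, hΩo.interior_eq]; exact ⟨hxtΩc, hc⟩
        have := part1 x hxΩc (x + t) hxf
        have heq : ‖x - (x + t)‖ = ‖t‖ := by
          rw [norm_sub_rev]
          congr 1
          abel
        rw [heq] at this
        calc u x ≤ |h (x + t) - h x| := le_abs_self _
          _ = |h x - h (x + t)| := abs_sub_comm _ _
          _ ≤ K₁ * ‖t‖ ^ τ := this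
    have hzU : z ∈ U := ⟨hz, by
      have : z + t = w := by rw [ht]; abel
      simpa [this] using hw⟩
    have := max_principle (‖t‖⁻¹ • t) hte U hUo hUb u huc humv (K₁ * ‖t‖ ^ τ) hMb
      z (subset_closure hzU)
    have hzt : z + t = w := by rw [ht]; abel
    rw [hudef] at this
    simpa [hzt] using this
  have key2 : ∀ z ∈ Ω, ∀ w ∈ Ω, |h z - h w| ≤ K₁ * ‖z - w‖ ^ τ := by
    intro z hz w hw
    rw [abs_sub_le_iff]
    refine ⟨?_, ?_⟩
    · exact key w hw z hz
    · have := key z hz w hw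
      rwa [norm_sub_rev] at this
  have part2 : ∀ z ∈ closure Ω, ∀ w ∈ closure Ω, |h z - h w| ≤ K₁ * ‖z - w‖ ^ τ := by
    intro z hz w hw
    obtain ⟨zs, hzs, hzlim⟩ := mem_closure_iff_seq_limit.mp hz
    obtain ⟨ws, hws, hwlim⟩ := mem_closure_iff_seq_limit.mp hw
    have hhz : Tendsto (fun k => h (zs k)) atTop (nhds (h z)) :=
      (hhc z hz).tendsto.comp
        (tendsto_nhdsWithin_of_tendsto_nhds_of_eventually_within zs hzlim
          (Eventually.of_forall fun k => subset_closure (hzs k)))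
    have hhw : Tendsto (fun k => h (ws k)) atTop (nhds (h w)) :=
      (hhc w hw).tendsto.comp
        (tendsto_nhdsWithin_of_tendsto_nhds_of_eventually_within ws hwlim
          (Eventually.of_forall fun k => subset_closure (hws k)))
    have hL : Tendsto (fun k => |h (zs k) - h (ws k)|) atTop (nhds (|h z - h w|)) :=
      (hhz.sub hhw).abs
    have hnorm : Tendsto (fun k => ‖zs k - ws k‖) atTop (nhds (‖z - w‖)) :=
      (hzlim.sub hwlim).norm
    have hrpow : Tendsto (fun k => ‖zs k - ws k‖ ^ τ) atTop (nhds (‖z - w‖ ^ τ)) :=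
      ((Real.continuousAt_rpow_const _ τ (Or.inr hτ0.le)).tendsto.comp hnorm)
    have hR : Tendsto (fun k => K₁ * ‖zs k - ws k‖ ^ τ) atTop (nhds (K₁ * ‖z - w‖ ^ τ)) :=
      hrpow.const_mul K₁
    exact le_of_tendsto_of_tendsto' hL hR fun k => key2 (zs k) (hzs k) (ws k) (hws k)
  exact ⟨K₁, hK₁0, part1, part2⟩

end Main

end Aux

/-- If `h` is harmonic in a bounded open `Ω ⊆ ℂⁿ ≅ ℝ^{2n}`, continuous up to the boundary
with boundary values `φ`, and is squeezed between a subharmonic barrier `b` and a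
superharmonic barrier `a`, both `τ`-Hölder on the closure of `Ω` and equal to `φ` on
`∂Ω`, then `|h(z) − h(ξ)| ≤ K₁ |z − ξ|^τ` for `z` in the closure and `ξ ∈ ∂Ω`, and
consequently `h` is `τ`-Hölder on the closure of `Ω`. -/
theorem stmt5 (n : ℕ) (Ω : Set (EuclideanSpace ℝ (Fin (2 * n))))
    (hΩo : IsOpen Ω) (hΩb : Bornology.IsBounded Ω)
    (τ : ℝ) (hτ0 : 0 < τ) (hτ1 : τ < 1)
    (h φ a b : EuclideanSpace ℝ (Fin (2 * n)) → ℝ)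
    (hhc : ContinuousOn h (closure Ω)) (hharm : HarmonicOn h Ω)
    (hhφ : ∀ ξ ∈ frontier Ω, h ξ = φ ξ)
    (hac : ContinuousOn a (closure Ω)) (hsup : SuperharmonicOn a Ω)
    (hbc : ContinuousOn b (closure Ω)) (hsub : SubharmonicOn b Ω)
    (hsqueeze : ∀ z ∈ closure Ω, b z ≤ h z ∧ h z ≤ a z)
    (haφ : ∀ ξ ∈ frontier Ω, a ξ = φ ξ) (hbφ : ∀ ξ ∈ frontier Ω, b ξ = φ ξ)
    (Ca : ℝ) (ha_hold : ∀ z ∈ closure Ω, ∀ w ∈ closure Ω, |a z - a w| ≤ Ca * ‖z - w‖ ^ τ)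
    (Cb : ℝ) (hb_hold : ∀ z ∈ closure Ω, ∀ w ∈ closure Ω, |b z - b w| ≤ Cb * ‖z - w‖ ^ τ) :
    ∃ K₁ > (0 : ℝ),
      (∀ z ∈ closure Ω, ∀ ξ ∈ frontier Ω, |h z - h ξ| ≤ K₁ * ‖z - ξ‖ ^ τ) ∧
        ∀ z ∈ closure Ω, ∀ w ∈ closure Ω, |h z - h w| ≤ K₁ * ‖z - w‖ ^ τ := by
  exact stmt5' Ω hΩo hΩb τ hτ0 h φ a b hhc hharm hhφ hsqueeze haφ hbφ Ca ha_hold Cb hb_hold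
end
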